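/- arXiv:2111.01997 — 7 statements merged into one kernel-verified Lean document; each statement's English description precedes it below -/
import Mathlib

section
/- Let n ≥ 1 and 0 < ε < 1/2. If H ⊆ {0,1}^n is a deterministic ε-hitter for the class of permutation branching programs of length n, width 2, and a single accept state, then |H| ≥ n. (In particular the same lower bound holds for hitters for permutation branching programs of length n and arbitrary width with a single accept state.) -/
/-- An ordered branching program of length `n` and width `w`: a start state,
a transition function for each layer, and a set of accept states. -/
structure OBP (n w : ℕ) where
  start : Fin w
  trans : ℕ → Fin w → Bool → Fin w
  accept : Finset (Fin w)

namespace OBP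

variable {n w : ℕ}

/-- The state reached from state `v` in layer `i` by walking along the bits of `z`. -/
def walk (B : OBP n w) : ℕ → Fin w → List Bool → Fin w
  | _, v, [] => v
  | i, v, b :: z => B.walk (i + 1) (B.trans i v b) z

/-- `B.eval x = true` iff the walk from the start state along `x` ends at an accept state. -/
def eval (B : OBP n w) (x : Fin n → Bool) : Bool :=
  decide (B.walk 0 B.start (List.ofFn x) ∈ B.accept)

/-- The probability that `B` accepts a uniformly random input. -/
noncomputable def acceptProb (B : OBP n w) : ℝ :=
  ((Finset.univ.filter fun x : Fin n → Bool => B.eval x = true).card : ℝ) / 2 ^ n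

/-- `B` is a permutation branching program: each layer's transitions are permutations. -/
def IsPerm (B : OBP n w) : Prop :=
  ∀ i < n, ∀ b, Function.Bijective fun v => B.trans i v b

/-- The hit set at layer `i` induced by `H`: the states of layer `i` from which the walk
along the last `n - i` bits of some `y ∈ H` reaches an accept state. -/
def hitSet (B : OBP n w) (H : Finset (Fin n → Bool)) (i : ℕ) : Finset (Fin w) :=
  Finset.univ.filter fun v => ∃ y ∈ H, B.walk i v ((List.ofFn y).drop i) ∈ B.accept

/-- The induced hit function `B_H`: accept iff the walk from the start state stays within
the hit sets at every layer. -/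
def hitFun (B : OBP n w) (H : Finset (Fin n → Bool)) (x : Fin n → Bool) : Bool :=
  decide (∀ i ≤ n, B.walk 0 B.start ((List.ofFn x).take i) ∈ B.hitSet H i)

end OBP

/-- The fraction of inputs on which `f` outputs `true`. -/
noncomputable def acceptFrac {n : ℕ} (f : (Fin n → Bool) → Bool) : ℝ :=
  ((Finset.univ.filter fun x : Fin n → Bool => f x = true).card : ℝ) / 2 ^ n

/-- `(Q, g)` is a deterministic nonadaptive `ε`-sampler for the class `F`: the output
`g f` depends only on the restriction of `f` to `Q`, and estimates the acceptance
probability of every `f ∈ F` to within `ε`. -/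
def IsSampler {n : ℕ} (F : Set ((Fin n → Bool) → Bool)) (Q : Finset (Fin n → Bool))
    (g : ((Fin n → Bool) → Bool) → ℝ) (ε : ℝ) : Prop :=
  (∀ f f' : (Fin n → Bool) → Bool, (∀ x ∈ Q, f x = f' x) → g f = g f') ∧
    ∀ f ∈ F, |g f - acceptFrac f| ≤ ε

/-- `H` is a deterministic `ε`-hitter for the class `F`. -/
def IsHitter {n : ℕ} (F : Set ((Fin n → Bool) → Bool)) (H : Finset (Fin n → Bool))
    (ε : ℝ) : Prop :=
  ∀ f ∈ F, acceptFrac f > ε → ∃ x ∈ H, f x = true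

/-- Functions computed by permutation branching programs of length `n` and width `w`. -/
def permClassW (n w : ℕ) : Set ((Fin n → Bool) → Bool) :=
  { f | ∃ B : OBP n w, B.IsPerm ∧ f = B.eval }

/-- Functions computed by permutation branching programs of length `n`, arbitrary width,
with a single accept state. -/
def permClassSingle (n : ℕ) : Set ((Fin n → Bool) → Bool) :=
  { f | ∃ w, ∃ B : OBP n w, B.IsPerm ∧ B.accept.card = 1 ∧ f = B.eval }

/-- Functions computed by permutation branching programs of length `n`, arbitrary width,
with at most `a` accept states. -/
def permClassA (n a : ℕ) : Set ((Fin n → Bool) → Bool) :=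
  { f | ∃ w, ∃ B : OBP n w, B.IsPerm ∧ B.accept.card ≤ a ∧ f = B.eval }

/-- Functions computed by ordered branching programs of length `n` and width `w`. -/
def obpClassW (n w : ℕ) : Set ((Fin n → Bool) → Bool) :=
  { f | ∃ B : OBP n w, f = B.eval }

-- aux
def dd (n : ℕ) (S : Fin n → Bool) (i : ℕ) (b : Bool) : ZMod 2 :=
  if h : i < n then (if S ⟨i, h⟩ && b then 1 else 0) else 0

def parBP (n : ℕ) (S : Fin n → Bool) : OBP n 2 where
  start := 0
  trans := fun i v b => (show ZMod 2 from v) + dd n S i b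
  accept := {1}

def par (n : ℕ) (S : Fin n → Bool) (x : Fin n → Bool) : ZMod 2 :=
  ∑ i : Fin n, if S i && x i then 1 else 0

lemma parBP_isPerm (n : ℕ) (S : Fin n → Bool) : (parBP n S).IsPerm := by
  intro i hi b
  have : (fun v : Fin 2 => (parBP n S).trans i v b) =
      fun v : ZMod 2 => v + dd n S i b := rfl
  rw [this]
  exact (Equiv.addRight (dd n S i b)).bijective

lemma walk_eq (n : ℕ) (S : Fin n → Bool) : ∀ (z : List Bool) (i : ℕ) (v : ZMod 2),
    (parBP n S).walk i v z = v + ∑ j ∈ Finset.range z.length, dd n S (i + j) (z.getD j false)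
  | [], i, v => by simp [OBP.walk]; rfl
  | b :: z, i, v => by
    show (parBP n S).walk (i+1) ((parBP n S).trans i v b) z = _
    rw [walk_eq n S z (i+1) ((parBP n S).trans i v b)]
    rw [List.length_cons, Finset.sum_range_succ']
    simp only [List.getD_cons_succ, List.getD_cons_zero]
    have h1 : ∀ j, i + 1 + j = i + (j + 1) := by omega
    simp only [h1]
    show v + dd n S i b + _ = _
    simp [add_assoc, add_comm, add_left_comm]

lemma walk_par (n : ℕ) (S : Fin n → Bool) (x : Fin n → Bool) :
    (parBP n S).walk 0 (parBP n S).start (List.ofFn x) = par n S x := by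
  rw [show (parBP n S).start = (0 : ZMod 2) from rfl, walk_eq]
  simp only [List.length_ofFn, zero_add]
  have h : ∀ j ∈ Finset.range n, dd n S j ((List.ofFn x).getD j false) =
      (fun j => if h : j < n then (if S ⟨j,h⟩ && x ⟨j,h⟩ then (1:ZMod 2) else 0) else 0) j := by
    intro j hj
    rw [Finset.mem_range] at hj
    rw [dd, List.getD_eq_getElem _ _ (by simpa using hj)]
    simp [hj, List.getElem_ofFn]
  rw [Finset.sum_congr rfl h, ← Fin.sum_univ_eq_sum_range]
  apply Finset.sum_congr rfl
  intro i _
  simp [i.isLt, par]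
  split_ifs <;> rfl

lemma eval_parBP (n : ℕ) (S : Fin n → Bool) (x : Fin n → Bool) :
    (parBP n S).eval x = decide (par n S x = 1) := by
  rw [OBP.eval, walk_par]
  simp [parBP]
  exact decide_eq_decide.mpr Finset.mem_singleton

lemma zmod2_ne_one {a : ZMod 2} (h : a ≠ 1) : a = 0 := by revert a; decide

lemma par_flip (n : ℕ) (S : Fin n → Bool) (x : Fin n → Bool) (j : Fin n) (hj : S j = true) :
    par n S (Function.update x j (!x j)) = par n S x + 1 := by
  unfold par
  rw [← Finset.sum_erase_add _ _ (Finset.mem_univ j),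
      ← Finset.sum_erase_add _ _ (Finset.mem_univ j)]
  have h1 : ∀ i ∈ Finset.univ.erase j,
      (if S i && Function.update x j (!x j) i then (1:ZMod 2) else 0) =
      (if S i && x i then (1:ZMod 2) else 0) := by
    intro i hi
    rw [Function.update_of_ne (Finset.ne_of_mem_erase hi)]
  rw [Finset.sum_congr rfl h1]
  rw [Function.update_self, hj]
  cases hx : x j <;> simp [add_assoc] <;> decide

lemma card_par_one (n : ℕ) (S : Fin n → Bool) (j : Fin n) (hj : S j = true) (hn : 1 ≤ n) :
    (Finset.univ.filter fun x : Fin n → Bool => par n S x = 1).card = 2 ^ (n - 1) := by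
  classical
  set A := Finset.univ.filter fun x : Fin n → Bool => par n S x = 1 with hA
  set B := Finset.univ.filter fun x : Fin n → Bool => ¬ (par n S x = 1) with hB
  have hcard : A.card = B.card := by
    apply Finset.card_bij' (fun x _ => Function.update x j (!x j))
      (fun x _ => Function.update x j (!x j))
    · intro x _
      simp [Function.update_idem, Function.update_self, Function.update_eq_self]
    · intro x _
      simp [Function.update_idem, Function.update_self, Function.update_eq_self]
    · intro x hx
      simp only [hA, hB, Finset.mem_filter, Finset.mem_univ, true_and] at hx ⊢
      rw [par_flip n S x j hj, hx]; decide
    · intro x hx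
      simp only [hA, hB, Finset.mem_filter, Finset.mem_univ, true_and] at hx ⊢
      rw [par_flip n S x j hj]
      have := zmod2_ne_one hx
      rw [this]; decide
  have hsum : A.card + B.card = 2 ^ n := by
    rw [hA, hB, Finset.card_filter_add_card_filter_not]
    simp [Fintype.card_fun]
  have : 2 * A.card = 2 ^ n := by omega
  have h2 : 2 ^ n = 2 * 2 ^ (n - 1) := by
    rw [← pow_succ']
    congr 1
    omega
  omega

lemma zmod2_ne_zero {a : ZMod 2} (h : a ≠ 0) : a = 1 := by revert a; decide

lemma acceptFrac_parBP (n : ℕ) (hn : 1 ≤ n) (S : Fin n → Bool) (j : Fin n) (hj : S j = true) :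
    acceptFrac (parBP n S).eval = 1 / 2 := by
  unfold acceptFrac
  have he : (Finset.univ.filter fun x : Fin n → Bool => (parBP n S).eval x = true) =
      Finset.univ.filter fun x => par n S x = 1 := by
    apply Finset.filter_congr; intro x _; simp [eval_parBP]
  rw [he, card_par_one n S j hj hn]
  have h2 : (2:ℝ) ^ n = 2 ^ (n-1) * 2 := by
    rw [← pow_succ]; congr 1; omega
  rw [h2]
  have hp : (0:ℝ) < 2 ^ (n-1) := by positivity
  field_simp
  norm_num

/-- Any deterministic `ε`-hitter (`ε < 1/2`) for width-2 permutation branching programs of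
length `n` with a single accept state has at least `n` elements. -/
theorem stmt3 {n : ℕ} (hn : 1 ≤ n) (ε : ℝ) (hε0 : 0 < ε) (hε : ε < 1 / 2)
    (H : Finset (Fin n → Bool))
    (hH : IsHitter {f | ∃ B : OBP n 2, B.IsPerm ∧ B.accept.card = 1 ∧ f = B.eval} H ε) :
    n ≤ H.card := by
  have hH' : ∀ f ∈ {f | ∃ B : OBP n 2, B.IsPerm ∧ B.accept.card = 1 ∧ f = B.eval},
      acceptFrac f > ε → ∃ x ∈ H, f x = true := hH
  classical
  let φ : (Fin n → ZMod 2) →ₗ[ZMod 2] (↥H → ZMod 2) :=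
    LinearMap.pi fun y => ∑ i : Fin n,
      (if (y : Fin n → Bool) i then (1:ZMod 2) else 0) • LinearMap.proj i
  have hφ : ∀ (S : Fin n → ZMod 2) (y : ↥H),
      φ S y = ∑ i : Fin n, (if (y : Fin n → Bool) i then S i else 0) := by
    intro S y
    simp only [φ, LinearMap.pi_apply, LinearMap.sum_apply]
    apply Finset.sum_congr rfl
    intro d _
    split_ifs <;> simp
  have hinj : Function.Injective φ := by
    rw [← LinearMap.ker_eq_bot, LinearMap.ker_eq_bot']
    intro S hS
    by_contra hS0
    obtain ⟨j, hjne⟩ : ∃ j, S j ≠ 0 := by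
      by_contra h; push_neg at h; exact hS0 (funext h)
    have hj1 : S j = 1 := zmod2_ne_zero hjne
    set Sb : Fin n → Bool := fun i => decide (S i = 1) with hSb
    have hSbj : Sb j = true := by simp [hSb, hj1]
    have hmem : (parBP n Sb).eval ∈
        {f | ∃ B : OBP n 2, B.IsPerm ∧ B.accept.card = 1 ∧ f = B.eval} :=
      ⟨parBP n Sb, parBP_isPerm n Sb, rfl, rfl⟩
    have hfrac : acceptFrac (parBP n Sb).eval = 1/2 := acceptFrac_parBP n hn Sb j hSbj
    obtain ⟨y, hyH, hy⟩ := hH' _ hmem (by rw [hfrac]; exact hε)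
    have hpar : par n Sb y = 1 := by simpa [eval_parBP] using hy
    have h0 : φ S ⟨y, hyH⟩ = 0 := by rw [hS]; rfl
    rw [hφ] at h0
    have hsum : (∑ i : Fin n, (if y i then S i else 0)) = par n Sb y := by
      apply Finset.sum_congr rfl
      intro i _
      by_cases hyi : y i
      · by_cases hsi : S i = 1
        · simp [par, hyi, hsi, hSb]
        · simp [par, hyi, hsi, hSb, zmod2_ne_one hsi]
      · simp [par, hyi, hSb]
    rw [hsum, hpar] at h0
    exact one_ne_zero h0
  calc n = Module.finrank (ZMod 2) (Fin n → ZMod 2) := (Module.finrank_fin_fun (R := ZMod 2)).symm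
    _ ≤ Module.finrank (ZMod 2) (↥H → ZMod 2) :=
        LinearMap.finrank_le_finrank_of_injective hinj
    _ = H.card := by
        rw [Module.finrank_fintype_fun_eq_card, Fintype.card_coe]
end

section
/- Let n, a ≥ 1 and let ε be a real number with 0 < ε ≤ 1/4 and a/ε ≤ 2^n. If H ⊆ {0,1}^n is a deterministic ε-hitter for the class of permutation branching programs of length n, arbitrary width, with at most a accept states, then |H| > a/(4ε). -/
namespace StmtAux

open Finset

/-- Accumulated xor contribution of list `l` starting at layer `i`, at coordinate `j`. -/
def F : ℕ → List Bool → ℕ → Bool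
  | _, [], _ => false
  | i, b :: t, j => xor (b && decide (j = i)) (F (i+1) t j)

lemma F_of_lt : ∀ (l : List Bool) (i j : ℕ), j < i → F i l j = false
  | [], _, _, _ => rfl
  | b :: t, i, j, hj => by
    have h1 : j ≠ i := Nat.ne_of_lt hj
    simp [F, h1, F_of_lt t (i+1) j (Nat.lt_succ_of_lt hj)]

lemma F_ofFn : ∀ {n : ℕ} (x : Fin n → Bool) (i j : ℕ) (hj : j < n),
    F i (List.ofFn x) (i + j) = x ⟨j, hj⟩ := by
  intro n
  induction n with
  | zero => intro x i j hj; omega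
  | succ n ih =>
    intro x i j hj
    rw [List.ofFn_succ]
    cases j with
    | zero =>
      simp [F, F_of_lt (List.ofFn fun k : Fin n => x k.succ) (i+1) i (by omega)]
    | succ j' =>
      have h1 : decide (i + (j' + 1) = i) = false := by simp
      simp only [F, h1, Bool.and_false, Bool.false_xor]
      have h2 : i + (j' + 1) = (i + 1) + j' := by omega
      rw [h2, ih (fun k => x k.succ) (i+1) j' (by omega)]
      rfl

variable {m n : ℕ}

/-- The xor-with-prefix permutation branching program. -/
def myBP (m n : ℕ) (e : (Fin m → Bool) ≃ Fin (2^m)) (A : Finset (Fin m → Bool)) :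
    OBP n (2^m) where
  start := e (fun _ => false)
  trans i v b := e (fun j => xor (e.symm v j) (b && decide ((j : ℕ) = i)))
  accept := A.map ⟨e, e.injective⟩

lemma myBP_isPerm (e : (Fin m → Bool) ≃ Fin (2^m)) (A : Finset (Fin m → Bool)) :
    (myBP m n e A).IsPerm := by
  intro i _ b
  have : (fun v => (myBP m n e A).trans i v b)
      = e ∘ (fun u : Fin m → Bool => fun j => xor (u j) (b && decide ((j : ℕ) = i))) ∘ e.symm := rfl
  rw [this]
  apply (e.bijective).comp
  apply Function.Bijective.comp _ e.symm.bijective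
  apply Function.Involutive.bijective
  intro u
  funext j
  simp [Bool.xor_assoc]

lemma myBP_walk (e : (Fin m → Bool) ≃ Fin (2^m)) (A : Finset (Fin m → Bool)) :
    ∀ (l : List Bool) (i : ℕ) (u : Fin m → Bool),
      (myBP m n e A).walk i (e u) l = e (fun j => xor (u j) (F i l (j : ℕ))) := by
  intro l
  induction l with
  | nil => intro i u; simp [OBP.walk, F]
  | cons b t ih =>
    intro i u
    show (myBP m n e A).walk (i+1) ((myBP m n e A).trans i (e u) b) t = _
    have ht : (myBP m n e A).trans i (e u) b
        = e (fun j => xor (u j) (b && decide ((j : ℕ) = i))) := by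
      show e _ = e _
      congr 1
      funext j
      simp
    rw [ht, ih]
    congr 1
    funext j
    simp [F, Bool.xor_assoc]

lemma myBP_eval (hmn : m ≤ n) (e : (Fin m → Bool) ≃ Fin (2^m)) (A : Finset (Fin m → Bool))
    (x : Fin n → Bool) :
    (myBP m n e A).eval x = decide ((fun j : Fin m => x (Fin.castLE hmn j)) ∈ A) := by
  unfold OBP.eval
  have hs : (myBP m n e A).start = e (fun _ => false) := rfl
  rw [hs, myBP_walk]
  have hw : (fun j : Fin m => xor false (F 0 (List.ofFn x) (j : ℕ)))
      = fun j : Fin m => x (Fin.castLE hmn j) := by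
    funext j
    have hj : (j : ℕ) < n := lt_of_lt_of_le j.isLt hmn
    have := F_ofFn x 0 (j : ℕ) hj
    simp only [Nat.zero_add] at this
    simp [this]
    rfl
  rw [hw]
  have : (myBP m n e A).accept = A.map ⟨e, e.injective⟩ := rfl
  simp [this]

lemma count_restrict (hmn : m ≤ n) (A : Finset (Fin m → Bool)) :
    (Finset.univ.filter fun x : Fin n → Bool =>
      (fun j : Fin m => x (Fin.castLE hmn j)) ∈ A).card = A.card * 2 ^ (n - m) := by
  have hcard : (Finset.univ : Finset (Fin (n - m) → Bool)).card = 2 ^ (n - m) := by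
    simp [Fintype.card_fun]
  rw [← hcard, ← Finset.card_product]
  refine Finset.card_nbij'
    (i := fun x => (fun j : Fin m => x (Fin.castLE hmn j),
      fun j : Fin (n - m) => x ⟨m + (j : ℕ), by have := j.isLt; omega⟩))
    (j := fun p => fun i : Fin n =>
      if h : (i : ℕ) < m then p.1 ⟨i, h⟩
      else p.2 ⟨(i : ℕ) - m, by have := i.isLt; omega⟩) ?_ ?_ ?_ ?_
  · intro x hx
    simp only [Finset.mem_coe, Finset.mem_filter, Finset.mem_univ, true_and] at hx
    simp [Finset.mem_product, hx]
  · intro p hp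
    simp only [Finset.mem_coe, Finset.mem_product, Finset.mem_univ, and_true] at hp
    simp only [Finset.mem_coe, Finset.mem_filter, Finset.mem_univ, true_and]
    have he : ∀ j : Fin m,
        (fun i : Fin n => if h : (i : ℕ) < m then p.1 ⟨i, h⟩
          else p.2 ⟨(i : ℕ) - m, by have := i.isLt; omega⟩) (Fin.castLE hmn j) = p.1 j := by
      intro j
      dsimp only
      rw [dif_pos (show ((Fin.castLE hmn j : Fin n) : ℕ) < m from j.isLt)]
      exact congrArg p.1 (Fin.ext rfl)
    simpa [funext he] using hp
  · intro x _
    funext i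
    dsimp only
    by_cases h : (i : ℕ) < m
    · rw [dif_pos h]
      exact congrArg x (Fin.ext rfl)
    · rw [dif_neg h]
      exact congrArg x (Fin.ext (by simp; omega))
  · intro p hp
    dsimp only
    refine Prod.ext ?_ ?_
    · funext j
      dsimp only
      rw [dif_pos (show ((Fin.castLE hmn j : Fin n) : ℕ) < m from j.isLt)]
      exact congrArg p.1 (Fin.ext rfl)
    · funext j
      dsimp only
      rw [dif_neg (show ¬ ((⟨m + (j : ℕ), by have := j.isLt; omega⟩ : Fin n) : ℕ) < m by simp)]
      exact congrArg p.2 (Fin.ext (by simp))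

end StmtAux

/-- Any deterministic `ε`-hitter for unbounded-width permutation branching programs of
length `n` with at most `a` accept states has more than `a/(4ε)` elements. -/
theorem stmt4 {n a : ℕ} (hn : 1 ≤ n) (ha : 1 ≤ a) (ε : ℝ) (hε0 : 0 < ε) (hε : ε ≤ 1 / 4)
    (hbound : (a : ℝ) / ε ≤ 2 ^ n) (H : Finset (Fin n → Bool))
    (hH : IsHitter (permClassA n a) H ε) :
    (a : ℝ) / (4 * ε) < H.card := by
  classical
  by_contra hcon
  push_neg at hcon
  have ha1 : (1 : ℝ) ≤ a := by exact_mod_cast ha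
  -- choose m with a/(2ε) ≤ 2^m < a/ε
  set P : ℕ → Prop := fun m => (2 : ℝ) ^ m < a / ε with hPdef
  have hP0 : P 0 := by
    simp only [P, pow_zero]
    rw [lt_div_iff₀ hε0]
    nlinarith
  set m := Nat.findGreatest P n with hmdef
  have hm1 : P m := Nat.findGreatest_spec (Nat.zero_le n) hP0
  have hmn : m < n := by
    have h2 : (2 : ℝ) ^ m < 2 ^ n := lt_of_lt_of_le hm1 hbound
    exact (pow_lt_pow_iff_right₀ (by norm_num : (1:ℝ) < 2)).mp h2
  have hm2 : (a : ℝ) / ε ≤ 2 ^ (m + 1) := by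
    by_contra hc
    push_neg at hc
    exact Nat.findGreatest_is_greatest (Nat.lt_succ_self m) hmn hc
  have hm1p : ε * 2 ^ m < a := by
    have := (lt_div_iff₀ hε0).mp hm1
    linarith
  have h2mp : (a : ℝ) ≤ 2 * ε * 2 ^ m := by
    have := (div_le_iff₀ hε0).mp hm2
    rw [pow_succ] at this
    linarith
  have hconp : (H.card : ℝ) * (4 * ε) ≤ a := (le_div_iff₀ (by positivity)).mp hcon
  have hmn' : m ≤ n := le_of_lt hmn
  set restrict : (Fin n → Bool) → (Fin m → Bool) := fun x => fun j => x (Fin.castLE hmn' j)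
    with hres
  set I := H.image restrict with hI
  set T := (Finset.univ : Finset (Fin m → Bool)) \ I with hT
  have hIcard : I.card ≤ H.card := Finset.card_image_le
  have hI2 : I.card ≤ 2 ^ m := le_trans (Finset.card_le_univ I)
    (le_of_eq (by simp [Fintype.card_fun]))
  have hTcard : T.card = 2 ^ m - I.card := by
    rw [hT, Finset.card_sdiff_of_subset (Finset.subset_univ I), Finset.card_univ]
    congr 1
    simp [Fintype.card_fun]
  have hTcardR : (2 : ℝ) ^ m - H.card ≤ T.card := by
    rw [hTcard, Nat.cast_sub hI2]
    push_cast
    have : (I.card : ℝ) ≤ H.card := by exact_mod_cast hIcard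
    linarith
  set t := min a T.card with ht
  obtain ⟨A, hAT, hAcard⟩ := Finset.exists_subset_card_eq (s := T) (n := t) (min_le_right _ _)
  let e : (Fin m → Bool) ≃ Fin (2 ^ m) := Fintype.equivFinOfCardEq (by simp [Fintype.card_fun])
  set B := StmtAux.myBP m n e A with hB
  have hfmem : B.eval ∈ permClassA n a := by
    refine ⟨2 ^ m, B, StmtAux.myBP_isPerm e A, ?_, rfl⟩
    show (A.map _).card ≤ a
    rw [Finset.card_map, hAcard]
    exact min_le_left _ _
  have htlb : ε * (2 : ℝ) ^ m < t := by
    have hc1 : ε * (2 : ℝ) ^ m < a := hm1p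
    have hc2 : ε * (2 : ℝ) ^ m < T.card := by
      have hk : (H.card : ℝ) ≤ 2 ^ m / 2 := by nlinarith
      nlinarith [pow_pos (by norm_num : (0:ℝ) < 2) m]
    have : (t : ℝ) = min (a : ℝ) (T.card : ℝ) := by
      rw [ht, Nat.cast_min]
    rw [this]
    exact lt_min hc1 hc2
  have hcount : (Finset.univ.filter fun x : Fin n → Bool => B.eval x = true).card
      = t * 2 ^ (n - m) := by
    rw [← hAcard, ← StmtAux.count_restrict hmn' A]
    congr 1
    apply Finset.filter_congr
    intro x _
    rw [hB, StmtAux.myBP_eval hmn' e A x]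
    simp
  have hgt : acceptFrac B.eval > ε := by
    unfold acceptFrac
    rw [hcount]
    rw [gt_iff_lt, lt_div_iff₀ (by positivity)]
    have h2n : (2 : ℝ) ^ n = 2 ^ m * 2 ^ (n - m) := by
      rw [← pow_add]; congr 1; omega
    rw [h2n]
    push_cast
    calc ε * ((2:ℝ) ^ m * 2 ^ (n - m)) = (ε * 2 ^ m) * 2 ^ (n - m) := by ring
      _ < t * 2 ^ (n - m) := by
          apply mul_lt_mul_of_pos_right htlb (by positivity)
  obtain ⟨y, hyH, hy⟩ := hH _ hfmem hgt
  rw [hB, StmtAux.myBP_eval hmn' e A y, decide_eq_true_eq] at hy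
  have hmem : restrict y ∈ I := Finset.mem_image_of_mem restrict hyH
  have hmem2 := hAT hy
  rw [hT, Finset.mem_sdiff] at hmem2
  exact hmem2.2 hmem
end

section
/- Let n, a ≥ 1 and let ε be a real number with 0 < ε ≤ 1/8 and a/(2ε) ≤ 2^n. If (Q, g) is a deterministic nonadaptive ε-sampler for the class of permutation branching programs of length n, arbitrary width, with at most a accept states, then |Q| ≥ n and |Q| > a/(8ε). -/
section AddProg
variable {G : Type} [AddCommGroup G] [Fintype G] [DecidableEq G]

noncomputable def addProg (n : ℕ) (d : ℕ → Bool → G) (A : Finset G) :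
    OBP n (Fintype.card G) where
  start := Fintype.equivFin G 0
  trans := fun i v b => Fintype.equivFin G ((Fintype.equivFin G).symm v + d i b)
  accept := A.map (Fintype.equivFin G).toEmbedding

def dsum (d : ℕ → Bool → G) : ℕ → List Bool → G
  | _, [] => 0
  | i, b :: z => d i b + dsum d (i + 1) z

lemma addProg_isPerm (n : ℕ) (d : ℕ → Bool → G) (A : Finset G) :
    (addProg n d A).IsPerm := by
  intro i _ b
  exact ((Fintype.equivFin G).symm.trans
    ((Equiv.addRight (d i b)).trans (Fintype.equivFin G))).bijective

lemma addProg_walk (n : ℕ) (d : ℕ → Bool → G) (A : Finset G) :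
    ∀ (z : List Bool) (i : ℕ) (v : Fin (Fintype.card G)),
      (addProg n d A).walk i v z
        = Fintype.equivFin G ((Fintype.equivFin G).symm v + dsum d i z) := by
  intro z
  induction z with
  | nil => intro i v; simp [OBP.walk, dsum]
  | cons b z ih =>
      intro i v
      rw [OBP.walk, ih]
      simp only [addProg, Equiv.symm_apply_apply, dsum, add_assoc]

lemma dsum_ofFn (d : ℕ → Bool → G) {m : ℕ} (x : Fin m → Bool) :
    ∀ i : ℕ, dsum d i (List.ofFn x) = ∑ j : Fin m, d (i + j) (x j) := by
  induction m with
  | zero => intro i; simp [dsum]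
  | succ m ih =>
      intro i
      rw [List.ofFn_succ, dsum, ih (fun j => x j.succ) (i + 1), Fin.sum_univ_succ]
      simp only [Fin.val_zero, add_zero, Fin.val_succ,
        show ∀ j : ℕ, i + 1 + j = i + (j + 1) from fun j => by omega]

lemma addProg_eval (n : ℕ) (d : ℕ → Bool → G) (A : Finset G) (x : Fin n → Bool) :
    (addProg n d A).eval x = decide ((∑ j : Fin n, d j (x j)) ∈ A) := by
  rw [OBP.eval, addProg_walk, dsum_ofFn]
  simp only [addProg, Equiv.symm_apply_apply, zero_add]
  congr 1
  simp [Finset.mem_map]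

end AddProg

section Parity
variable {n : ℕ}

lemma zmod2_ne_zero_s5 : ∀ c : ZMod 2, c ≠ 0 → c = 1 := by decide

lemma parity_card (hn : 1 ≤ n) (s : Fin n → ZMod 2) (hs : s ≠ 0) :
    (Finset.univ.filter fun x : Fin n → Bool =>
      (∑ j : Fin n, if x j then s j else 0) = 1).card = 2 ^ (n - 1) := by
  classical
  obtain ⟨i₀, hi₀⟩ : ∃ i, s i ≠ 0 := Function.ne_iff.mp hs
  have hs1 : s i₀ = 1 := zmod2_ne_zero_s5 _ hi₀
  set F : (Fin n → Bool) → ZMod 2 := fun x => ∑ j : Fin n, if x j then s j else 0 with hF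
  have hupd : ∀ (x : Fin n → Bool) (c : Bool),
      F (Function.update x i₀ c)
        = (if c then (1 : ZMod 2) else 0) + ∑ j ∈ Finset.univ \ {i₀}, (if x j then s j else 0) := by
    intro x c
    have hfun : (fun j => if (Function.update x i₀ c) j then s j else 0)
        = Function.update (fun j => if x j then s j else 0) i₀ (if c then s i₀ else 0) := by
      funext j
      by_cases h : j = i₀
      · subst h; simp
      · simp [Function.update_of_ne h]
    rw [hF]
    simp only [hfun]
    rw [Finset.sum_update_of_mem (Finset.mem_univ i₀), hs1]
  have hflip : ∀ x : Fin n → Bool, F (Function.update x i₀ (!x i₀)) = 1 + F x := by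
    intro x
    have hx : F x = F (Function.update x i₀ (x i₀)) := by rw [Function.update_eq_self]
    rw [hupd, hx, hupd]
    cases h : x i₀
    · simp only [h, Bool.not_false, if_true, if_false, Bool.false_eq_true]
      rw [zero_add]
    · simp only [h, Bool.not_true, if_true, if_false, Bool.false_eq_true]
      rw [zero_add, ← add_assoc, show (1 : ZMod 2) + 1 = 0 from by decide, zero_add]
  have key : ∀ a : ZMod 2, 1 + a = 1 ↔ ¬ a = 1 := by decide
  set ι : (Fin n → Bool) → (Fin n → Bool) := fun x => Function.update x i₀ (!x i₀) with hι
  have hinv : ∀ x, ι (ι x) = x := by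
    intro x
    simp [hι, Function.update_idem, Function.update_self, Bool.not_not, Function.update_eq_self]
  have hcard : (Finset.univ.filter fun x : Fin n → Bool => F x = 1).card
      = (Finset.univ.filter fun x : Fin n → Bool => ¬ F x = 1).card := by
    have key2 : ∀ a : ZMod 2, ¬ (1 + a = 1) ↔ a = 1 := by decide
    apply Finset.card_bij' (fun x _ => ι x) (fun x _ => ι x)
    · intro x hx
      simp only [Finset.mem_filter, Finset.mem_univ, true_and] at hx ⊢
      rw [hι]
      show ¬ F (Function.update x i₀ (!x i₀)) = 1
      rw [hflip]
      exact (key2 _).mpr hx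
    · intro x hx
      simp only [Finset.mem_filter, Finset.mem_univ, true_and] at hx ⊢
      rw [hι]
      show F (Function.update x i₀ (!x i₀)) = 1
      rw [hflip]
      exact (key _).mpr hx
    · intro x _; exact hinv x
    · intro x _; exact hinv x
  have htot : (Finset.univ.filter fun x : Fin n → Bool => F x = 1).card
      + (Finset.univ.filter fun x : Fin n → Bool => ¬ F x = 1).card = 2 ^ n := by
    rw [Finset.card_filter_add_card_filter_not]
    simp [Fintype.card_fun]
  have hpow : 2 ^ n = 2 * 2 ^ (n - 1) := by
    rw [← pow_succ']
    congr 1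
    omega
  have h2 : 2 * (Finset.univ.filter fun x : Fin n → Bool => F x = 1).card
      = 2 * 2 ^ (n - 1) := by
    rw [two_mul, ← hpow, ← htot, hcard]
  exact Nat.eq_of_mul_eq_mul_left (by norm_num) h2

end Parity

section PrefixProg
variable {n k : ℕ}

lemma bool_zmod2 : ∀ (b : Bool) (a : ZMod 2),
    ((if b then (1 : ZMod 2) else 0) = a ↔ b = decide (a = 1)) := by decide

lemma card_filter_not_lt (hkn : k ≤ n) :
    (Finset.univ.filter fun i : Fin n => ¬ (i : ℕ) < k).card = n - k := by
  classical
  have h1 : (Finset.univ.filter fun i : Fin n => (i : ℕ) < k)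
      = Finset.univ.map ⟨Fin.castLE hkn, Fin.castLE_injective hkn⟩ := by
    ext i
    simp only [Finset.mem_filter, Finset.mem_univ, true_and, Finset.mem_map,
      Function.Embedding.coeFn_mk]
    constructor
    · intro h
      refine ⟨⟨(i : ℕ), h⟩, ?_⟩
      apply Fin.ext
      rfl
    · rintro ⟨t, -, rfl⟩
      exact t.isLt
  have h2 := Finset.card_filter_add_card_filter_not
    (s := (Finset.univ : Finset (Fin n))) (p := fun i : Fin n => (i : ℕ) < k)
  rw [h1] at h2
  simp only [Finset.card_map, Finset.card_univ, Fintype.card_fin] at h2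
  omega

lemma fiber_card (hkn : k ≤ n) (p : Fin k → Bool) :
    (Finset.univ.filter fun x : Fin n → Bool =>
      ∀ t : Fin k, x (Fin.castLE hkn t) = p t).card = 2 ^ (n - k) := by
  classical
  set T : Fin n → Finset Bool :=
    fun i => if h : (i : ℕ) < k then {p ⟨(i : ℕ), h⟩} else Finset.univ with hT
  have hset : (Finset.univ.filter fun x : Fin n → Bool =>
      ∀ t : Fin k, x (Fin.castLE hkn t) = p t) = Fintype.piFinset T := by
    ext x
    simp only [Finset.mem_filter, Finset.mem_univ, true_and, Fintype.mem_piFinset, hT]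
    constructor
    · intro h i
      by_cases hi : (i : ℕ) < k
      · rw [dif_pos hi]
        have : Fin.castLE hkn ⟨(i : ℕ), hi⟩ = i := by ext; rfl
        simp only [Finset.mem_singleton]
        have h2 := h ⟨(i : ℕ), hi⟩
        rwa [this] at h2
      · rw [dif_neg hi]; exact Finset.mem_univ _
    · intro h t
      have := h (Fin.castLE hkn t)
      rw [dif_pos (show ((Fin.castLE hkn t : Fin n) : ℕ) < k from t.isLt)] at this
      simpa using this
  rw [hset, Fintype.card_piFinset]
  have : ∀ i : Fin n, (T i).card = if (i : ℕ) < k then 1 else 2 := by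
    intro i
    by_cases hi : (i : ℕ) < k <;> simp [hT, hi]
  rw [Finset.prod_congr rfl fun i _ => this i, Finset.prod_ite]
  simp only [Finset.prod_const, one_pow, one_mul]
  rw [card_filter_not_lt hkn]

lemma pEnc_card (hkn : k ≤ n) (A : Finset (Fin k → ZMod 2)) :
    (Finset.univ.filter fun x : Fin n → Bool =>
      (fun t => if x (Fin.castLE hkn t) then (1 : ZMod 2) else 0) ∈ A).card
      = A.card * 2 ^ (n - k) := by
  classical
  set E : (Fin n → Bool) → (Fin k → ZMod 2) :=
    fun x t => if x (Fin.castLE hkn t) then (1 : ZMod 2) else 0 with hE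
  change (Finset.univ.filter fun x => E x ∈ A).card = _
  rw [Finset.card_eq_sum_card_fiberwise
    (f := E) (s := Finset.univ.filter fun x => E x ∈ A) (t := A) (fun x hx => (Finset.mem_filter.mp hx).2)]
  have hfib : ∀ g ∈ A,
      ((Finset.univ.filter fun x => E x ∈ A).filter fun x => E x = g).card
        = 2 ^ (n - k) := by
    intro g hg
    have h1 : ((Finset.univ.filter fun x => E x ∈ A).filter fun x => E x = g)
        = Finset.univ.filter fun x : Fin n → Bool =>
            ∀ t : Fin k, x (Fin.castLE hkn t) = decide (g t = 1) := by
      ext x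
      simp only [Finset.mem_filter, Finset.mem_univ, true_and]
      constructor
      · rintro ⟨-, hx⟩
        intro t
        rw [← bool_zmod2 (x (Fin.castLE hkn t)) (g t)]
        rw [hE] at hx
        exact congrFun hx t
      · intro h
        have hxg : E x = g := by
          funext t
          rw [hE]
          simp only
          rw [bool_zmod2]
          exact h t
        exact ⟨hxg ▸ hg, hxg⟩
    rw [h1, fiber_card hkn]
  rw [Finset.sum_congr rfl hfib, Finset.sum_const, smul_eq_mul]

end PrefixProg

section Main
variable {n a : ℕ} {ε : ℝ} {Q : Finset (Fin n → Bool)} {g : ((Fin n → Bool) → Bool) → ℝ}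

/-- The all-zero OBP. -/
def zeroOBP (n : ℕ) : OBP n 1 := ⟨0, fun _ v _ => v, ∅⟩

lemma zeroOBP_eval (x : Fin n → Bool) : (zeroOBP n).eval x = false := by
  simp [OBP.eval, zeroOBP]

lemma zeroOBP_mem : (zeroOBP n).eval ∈ permClassA n a :=
  ⟨1, zeroOBP n, fun _ _ _ => Function.bijective_id, by simp [zeroOBP], rfl⟩

lemma acceptFrac_zero : acceptFrac ((zeroOBP n).eval) = 0 := by
  unfold acceptFrac
  rw [Finset.filter_false_of_mem, Finset.card_empty]
  · norm_num
  · intro x _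
    simp [zeroOBP_eval]

lemma core_le (hε0 : 0 < ε) (hsamp : IsSampler (permClassA n a) Q g ε)
    (f : (Fin n → Bool) → Bool) (hf : f ∈ permClassA n a)
    (hQ : ∀ x ∈ Q, f x = false) : acceptFrac f ≤ 2 * ε := by
  have h1 := hsamp.2 f hf
  have h2 := hsamp.2 _ (zeroOBP_mem (a := a))
  rw [acceptFrac_zero, sub_zero] at h2
  have h3 : g f = g ((zeroOBP n).eval) :=
    hsamp.1 _ _ (fun x hx => by rw [hQ x hx, zeroOBP_eval])
  rw [h3] at h1
  rw [abs_le] at h1 h2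
  linarith [h1.1, h1.2, h2.1, h2.2]

end Main

section ParityInst
variable {n a : ℕ}

/-- parity transition increments -/
noncomputable def pard (n : ℕ) (s : Fin n → ZMod 2) : ℕ → Bool → ZMod 2 :=
  fun i b => if b then (if h : i < n then s ⟨i, h⟩ else 0) else 0

noncomputable def parProg (n : ℕ) (s : Fin n → ZMod 2) : OBP n (Fintype.card (ZMod 2)) :=
  addProg n (pard n s) ({1} : Finset (ZMod 2))

lemma parProg_mem (ha : 1 ≤ a) (s : Fin n → ZMod 2) :
    (parProg n s).eval ∈ permClassA n a := by
  refine ⟨_, parProg n s, addProg_isPerm _ _ _, ?_, rfl⟩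
  simp only [parProg, addProg, Finset.card_map, Finset.card_singleton]
  exact ha

lemma parProg_eval (s : Fin n → ZMod 2) (x : Fin n → Bool) :
    (parProg n s).eval x = decide ((∑ j : Fin n, if x j then s j else 0) = 1) := by
  rw [parProg, addProg_eval]
  congr 1
  simp only [Finset.mem_singleton, eq_iff_iff]
  constructor <;> intro h <;> rw [← h] <;>
    exact Finset.sum_congr rfl fun j _ => by
      simp [pard, j.isLt]

lemma parProg_frac (hn : 1 ≤ n) (s : Fin n → ZMod 2) (hs : s ≠ 0) :
    acceptFrac ((parProg n s).eval) = 1 / 2 := by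
  unfold acceptFrac
  have : (Finset.univ.filter fun x : Fin n → Bool => (parProg n s).eval x = true)
      = Finset.univ.filter fun x : Fin n → Bool =>
          (∑ j : Fin n, if x j then s j else 0) = 1 := by
    apply Finset.filter_congr
    intro x _
    rw [parProg_eval]
    simp
  rw [this, parity_card hn s hs]
  have h2 : (2 : ℝ) ^ n = 2 ^ (n - 1) * 2 := by
    rw [← pow_succ]
    congr 1
    omega
  rw [h2]
  rw [div_eq_div_iff (by positivity) (by norm_num)]
  push_cast
  ring

/-- Existence of a nonzero parity vanishing on a small set. -/
lemma exists_parity (Q : Finset (Fin n → Bool)) (hQ : Q.card < n) :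
    ∃ s : Fin n → ZMod 2, s ≠ 0 ∧
      ∀ x ∈ Q, (∑ j : Fin n, if x j then s j else 0) = 0 := by
  classical
  set φ : (Fin n → ZMod 2) →ₗ[ZMod 2] (Q → ZMod 2) :=
    LinearMap.pi fun q => ∑ j : Fin n,
      (if (q : Fin n → Bool) j then (1 : ZMod 2) else 0) • LinearMap.proj j with hφ
  have hker : LinearMap.ker φ ≠ ⊥ := by
    intro hbot
    have hinj : Function.Injective φ := LinearMap.ker_eq_bot.mp hbot
    have := LinearMap.finrank_le_finrank_of_injective hinj
    rw [Module.finrank_pi, Module.finrank_pi] at this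
    simp only [Fintype.card_fin, Fintype.card_coe] at this
    omega
  obtain ⟨s, hs0, hsne⟩ := Submodule.exists_mem_ne_zero_of_ne_bot hker
  refine ⟨s, hsne, ?_⟩
  intro x hx
  have h0 : φ s = 0 := LinearMap.mem_ker.mp hs0
  have := congrFun (congrArg (fun f => (f : Q → ZMod 2)) h0) ⟨x, hx⟩
  rw [hφ] at this
  simp only [LinearMap.pi_apply, LinearMap.sum_apply, LinearMap.smul_apply,
    LinearMap.proj_apply, Pi.zero_apply] at this
  calc (∑ j : Fin n, if x j then s j else 0)
      = ∑ j : Fin n, (if x j then (1 : ZMod 2) else 0) • s j := by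
        apply Finset.sum_congr rfl
        intro j _
        by_cases h : x j <;> simp [h]
    _ = 0 := this

end ParityInst

section PrefixInst
variable {n k a : ℕ}

noncomputable def preProg (n k : ℕ) (A : Finset (Fin k → ZMod 2)) :
    OBP n (Fintype.card (Fin k → ZMod 2)) :=
  addProg n (fun i b => if b then
    (if h : i < k then Pi.single (⟨i, h⟩ : Fin k) (1 : ZMod 2) else 0) else 0) A

lemma preProg_mem (A : Finset (Fin k → ZMod 2)) (hA : A.card ≤ a) :
    (preProg n k A).eval ∈ permClassA n a := by
  refine ⟨_, preProg n k A, addProg_isPerm _ _ _, ?_, rfl⟩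
  simpa only [preProg, addProg, Finset.card_map] using hA

lemma preProg_eval (hkn : k ≤ n) (A : Finset (Fin k → ZMod 2)) (x : Fin n → Bool) :
    (preProg n k A).eval x
      = decide ((fun t : Fin k =>
          if x (Fin.castLE hkn t) then (1 : ZMod 2) else 0) ∈ A) := by
  rw [preProg, addProg_eval]
  have hsum : (∑ j : Fin n, if x j then
      (if h : (j : ℕ) < k then Pi.single (⟨(j : ℕ), h⟩ : Fin k) (1 : ZMod 2) else 0) else 0)
      = fun t : Fin k => if x (Fin.castLE hkn t) then (1 : ZMod 2) else 0 := by
    funext t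
    rw [Finset.sum_apply]
    rw [Finset.sum_eq_single (Fin.castLE hkn t)]
    · have hlt : ((Fin.castLE hkn t : Fin n) : ℕ) < k := t.isLt
      by_cases hx : x (Fin.castLE hkn t)
      · simp only [hx, if_true, dif_pos hlt]
        have : (⟨((Fin.castLE hkn t : Fin n) : ℕ), hlt⟩ : Fin k) = t := by
          apply Fin.ext; rfl
        rw [this, Pi.single_eq_same]
      · simp [hx]
    · intro j _ hj
      by_cases hx : x j
      · simp only [hx, if_true]
        by_cases hjk : (j : ℕ) < k
        · rw [dif_pos hjk]
          apply Pi.single_eq_of_ne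
          intro hc
          apply hj
          apply Fin.ext
          rw [hc]
          rfl
        · rw [dif_neg hjk]; rfl
      · simp [hx]
    · intro h
      exact absurd (Finset.mem_univ _) h
  rw [hsum]

lemma preProg_frac (hkn : k ≤ n) (A : Finset (Fin k → ZMod 2)) :
    acceptFrac ((preProg n k A).eval) = (A.card : ℝ) / 2 ^ k := by
  unfold acceptFrac
  have hfilt : (Finset.univ.filter fun x : Fin n → Bool => (preProg n k A).eval x = true)
      = Finset.univ.filter fun x : Fin n → Bool =>
          (fun t : Fin k => if x (Fin.castLE hkn t) then (1 : ZMod 2) else 0) ∈ A := by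
    apply Finset.filter_congr
    intro x _
    rw [preProg_eval hkn]
    simp
  rw [hfilt, pEnc_card hkn]
  have h2 : (2 : ℝ) ^ n = 2 ^ k * 2 ^ (n - k) := by
    rw [← pow_add]
    congr 1
    omega
  rw [h2]
  push_cast
  rw [div_eq_div_iff (by positivity) (by positivity)]
  ring

end PrefixInst

/-- Query-complexity lower bound for deterministic nonadaptive samplers for
unbounded-width permutation branching programs with at most `a` accept states. -/
theorem stmt5 {n a : ℕ} (hn : 1 ≤ n) (ha : 1 ≤ a) (ε : ℝ) (hε0 : 0 < ε) (hε : ε ≤ 1 / 8)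
    (hbound : (a : ℝ) / (2 * ε) ≤ 2 ^ n)
    (Q : Finset (Fin n → Bool)) (g : ((Fin n → Bool) → Bool) → ℝ)
    (hsamp : IsSampler (permClassA n a) Q g ε) :
    n ≤ Q.card ∧ (a : ℝ) / (8 * ε) < Q.card := by
  have haR : (1 : ℝ) ≤ a := by exact_mod_cast ha
  constructor
  · -- Part 1 : n ≤ Q.card
    by_contra hcard
    push_neg at hcard
    obtain ⟨s, hs, hzero⟩ := exists_parity Q hcard
    have hvan : ∀ x ∈ Q, (parProg n s).eval x = false := by
      intro x hx
      rw [parProg_eval]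
      simp only [decide_eq_false_iff_not]
      rw [hzero x hx]
      decide
    have hle := core_le hε0 hsamp _ (parProg_mem ha s) hvan
    rw [parProg_frac hn s hs] at hle
    linarith
  · -- Part 2 : a / (8ε) < Q.card
    by_contra hcard
    push_neg at hcard
    -- choose k with a/(6ε) < 2^k ≤ a/(3ε)
    set t : ℝ := (a : ℝ) / (6 * ε) with htdef
    have ht1 : 1 < t := by
      rw [htdef, lt_div_iff₀ (by positivity)]
      linarith
    have hex : ∃ m : ℕ, t < 2 ^ m := pow_unbounded_of_one_lt t one_lt_two
    set k := Nat.find hex with hkdef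
    have hk : t < 2 ^ k := Nat.find_spec hex
    have hk0 : k ≠ 0 := by
      intro h
      rw [h] at hk
      simp at hk
      linarith
    have hmin : ¬ t < 2 ^ (k - 1) := Nat.find_min hex (by omega)
    push_neg at hmin
    have h2k : (2 : ℝ) ^ k ≤ 2 * t := by
      have : (2 : ℝ) ^ k = 2 * 2 ^ (k - 1) := by
        rw [← pow_succ']
        congr 1
        omega
      rw [this]
      linarith
    have hklt : (2 : ℝ) ^ k < (a : ℝ) / (2 * ε) := by
      have h3 : 2 * t = (a : ℝ) / (3 * ε) := by
        rw [htdef]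
        field_simp
        ring
      have h4 : (a : ℝ) / (3 * ε) < (a : ℝ) / (2 * ε) := by
        apply div_lt_div_of_pos_left (by linarith) (by positivity)
        linarith
      linarith
    have hkn : k < n := by
      have h8 : (2 : ℝ) ^ k < 2 ^ n := lt_of_lt_of_le hklt hbound
      by_contra hno
      push_neg at hno
      have : (2 : ℝ) ^ n ≤ 2 ^ k := pow_le_pow_right₀ (by norm_num) hno
      linarith
    have hkn' : k ≤ n := le_of_lt hkn
    have hQk : (Q.card : ℝ) < (1 - 2 * ε) * 2 ^ k := by
      have h34 : (a : ℝ) / (8 * ε) = (3 / 4) * t := by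
        rw [htdef]
        field_simp
        ring
      have h5 : (3 / 4 : ℝ) * t < (3 / 4) * 2 ^ k := by linarith
      have h6 : (3 / 4 : ℝ) * 2 ^ k ≤ (1 - 2 * ε) * 2 ^ k := by
        apply mul_le_mul_of_nonneg_right (by linarith) (by positivity)
      linarith
    -- the prefix-encoding image of Q
    set E : (Fin n → Bool) → (Fin k → ZMod 2) :=
      fun x => fun t' : Fin k => if x (Fin.castLE hkn' t') then (1 : ZMod 2) else 0 with hE
    set P : Finset (Fin k → ZMod 2) := Q.image E with hP
    have hPQ : P.card ≤ Q.card := Finset.card_image_le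
    have hunivcard : (Finset.univ : Finset (Fin k → ZMod 2)).card = 2 ^ k := by
      rw [Finset.card_univ, Fintype.card_fun, ZMod.card, Fintype.card_fin]
    have hP2k : P.card ≤ 2 ^ k := by
      rw [← hunivcard]
      exact Finset.card_le_card (Finset.subset_univ _)
    have hsd : ((Finset.univ : Finset (Fin k → ZMod 2)) \ P).card = 2 ^ k - P.card := by
      rw [Finset.card_sdiff_of_subset (Finset.subset_univ _), hunivcard]
    set m := min a (2 ^ k - P.card) with hm
    obtain ⟨A, hAsub, hAcard⟩ :=
      Finset.exists_subset_card_eq (s := (Finset.univ : Finset (Fin k → ZMod 2)) \ P) (n := m)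
        (by rw [hsd]; exact min_le_right _ _)
    have hvan : ∀ x ∈ Q, (preProg n k A).eval x = false := by
      intro x hx
      rw [preProg_eval hkn']
      simp only [decide_eq_false_iff_not]
      intro hmemA
      exact (Finset.mem_sdiff.mp (hAsub hmemA)).2 (Finset.mem_image_of_mem E hx)
    have hle := core_le hε0 hsamp _ (preProg_mem A (hAcard ▸ min_le_left _ _)) hvan
    rw [preProg_frac hkn' A, hAcard] at hle
    -- now derive the contradiction : m / 2^k > 2ε
    have hgt : 2 * ε < (m : ℝ) / 2 ^ k := by
      rw [lt_div_iff₀ (by positivity)]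
      rcases min_cases a (2 ^ k - P.card) with ⟨hmeq, _⟩ | ⟨hmeq, hcase⟩
      · -- m = a
        rw [hm, hmeq]
        have h7 : 2 * ε * 2 ^ k < a := by
          have := hklt
          rw [lt_div_iff₀ (by positivity)] at this
          linarith
        linarith
      · -- m = 2^k - P.card
        rw [hm, hmeq]
        rw [Nat.cast_sub hP2k]
        have hPr : (P.card : ℝ) ≤ (Q.card : ℝ) := by exact_mod_cast hPQ
        push_cast
        linarith
    linarith
end

section
/- Let n, a ≥ 1, let δ > 0, and let H ⊆ {0,1}^n be a deterministic δ/(n·a)-hitter for the class of permutation branching programs of length n, arbitrary width, with a single accept state. Then for every w and every permutation branching program B of length n and width w with at most a accept states, the induced hit function B_H satisfies |Pr[B_H(U_n)=1] − Pr[B(U_n)=1]| ≤ δ. -/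
namespace Stmt8Aux
open Finset

lemma walk_append {n w : ℕ} (B : OBP n w) (l l' : List Bool) : ∀ (j : ℕ) (v : Fin w),
    B.walk j v (l ++ l') = B.walk (j + l.length) (B.walk j v l) l' := by
  induction l with
  | nil => intro j v; simp [OBP.walk]
  | cons b t ih =>
    intro j v
    have h : j + (b :: t).length = (j + 1) + t.length := by simp; omega
    rw [h]
    simpa [OBP.walk] using ih (j + 1) (B.trans j v b)

lemma take_ofFn' {n : ℕ} {α : Type*} (i : ℕ) (x : Fin n → α) (hi : i ≤ n) :
    (List.ofFn x).take i = List.ofFn (fun j : Fin i => x (Fin.castLE hi j)) := by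
  apply List.ext_getElem
  · simp [hi]
  · intro k h1 h2; simp

lemma drop_ofFn' {n : ℕ} {α : Type*} (i : ℕ) (x : Fin n → α) :
    (List.ofFn x).drop i = List.ofFn (fun j : Fin (n - i) => x ⟨i + j.1, by have := j.2; omega⟩) := by
  apply List.ext_getElem
  · simp
  · intro k h1 h2; simp

def pre {n : ℕ} (i : ℕ) (hi : i ≤ n) (x : Fin n → Bool) : Fin i → Bool :=
  fun j => x (Fin.castLE hi j)

def suf {n : ℕ} (i : ℕ) (x : Fin n → Bool) : Fin (n - i) → Bool :=
  fun j => x ⟨i + j.1, by have := j.2; omega⟩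

lemma drop_eq_suf {n i : ℕ} (x : Fin n → Bool) :
    (List.ofFn x).drop i = List.ofFn (suf i x) := drop_ofFn' i x

lemma take_eq_pre {n i : ℕ} (hi : i ≤ n) (x : Fin n → Bool) :
    (List.ofFn x).take i = List.ofFn (pre i hi x) := take_ofFn' i x hi

def glue {n : ℕ} (i : ℕ) (p : Fin i → Bool) (s : Fin (n - i) → Bool) : Fin n → Bool :=
  fun j => if h : (j : ℕ) < i then p ⟨j, h⟩ else s ⟨j - i, by have := j.2; omega⟩

lemma pre_glue {n i : ℕ} (hi : i ≤ n) (p : Fin i → Bool) (s : Fin (n - i) → Bool) :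
    pre i hi (glue i p s) = p := by
  funext j; simp [pre, glue, j.2]

lemma suf_glue {n i : ℕ} (p : Fin i → Bool) (s : Fin (n - i) → Bool) :
    suf i (glue i p s) = s := by
  funext j
  have hj := j.2
  simp only [suf, glue]
  rw [dif_neg (by omega)]
  congr 1
  apply Fin.ext
  simp

lemma glue_pre_suf {n i : ℕ} (hi : i ≤ n) (x : Fin n → Bool) :
    glue i (pre i hi x) (suf i x) = x := by
  funext j
  by_cases h : (j : ℕ) < i
  · simp [pre, glue, h, Fin.castLE]
  · simp only [glue, dif_neg h, suf]
    congr 1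
    apply Fin.ext
    have := j.2
    simp
    omega

lemma card_split {n : ℕ} (i : ℕ) (hi : i ≤ n) (P : (Fin i → Bool) → Prop)
    (Q : (Fin (n - i) → Bool) → Prop) [DecidablePred P] [DecidablePred Q] :
    (univ.filter fun x : Fin n → Bool => P (pre i hi x) ∧ Q (suf i x)).card
      = (univ.filter P).card * (univ.filter Q).card := by
  rw [← Finset.card_product]
  apply Finset.card_bij' (fun x _ => (pre i hi x, suf i x))
      (fun z _ => glue i z.1 z.2)
  · intro x hx
    simp only [Finset.mem_filter, Finset.mem_univ, true_and] at hx
    simp [Finset.mem_product, hx.1, hx.2]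
  · intro z hz
    simp only [Finset.mem_product, Finset.mem_filter, Finset.mem_univ, true_and] at hz
    simp [pre_glue hi, suf_glue, hz.1, hz.2]
  · intro x _; exact glue_pre_suf hi x
  · intro z _; ext <;> simp [pre_glue hi, suf_glue]

/-- The key hitter consequence: from a state `v` outside the hit set at layer `i`,
the number of suffixes leading to a fixed accept state `u` is small. -/
lemma suffix_count_le {n w a : ℕ} (hn : 1 ≤ n) (ha : 1 ≤ a) {δ : ℝ} (hδ : 0 < δ)
    (H : Finset (Fin n → Bool)) (hH : IsHitter (permClassSingle n) H (δ / (n * a)))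
    (B : OBP n w) (hB : B.IsPerm) (i : ℕ) (hi : i ≤ n) (v u : Fin w)
    (hv : v ∉ B.hitSet H i) (hu : u ∈ B.accept) :
    ((univ.filter fun s : Fin (n - i) → Bool => B.walk i v (List.ofFn s) = u).card : ℝ)
      ≤ (δ / (n * a)) * 2 ^ (n - i) := by
  set B' : OBP n w := ⟨v, fun j st b => if j < i then st else B.trans j st b, {u}⟩ with hB'
  have hwlt : ∀ (l : List Bool) (j : ℕ) (st : Fin w), j + l.length ≤ i → B'.walk j st l = st := by
    intro l
    induction l with
    | nil => intro j st _; rfl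
    | cons b t ih =>
      intro j st h
      simp only [List.length_cons] at h
      show B'.walk (j+1) (B'.trans j st b) t = st
      have h1 : B'.trans j st b = st := by
        show (if j < i then st else B.trans j st b) = st
        rw [if_pos (by omega)]
      rw [h1]
      exact ih (j+1) st (by omega)
  have hwge : ∀ (l : List Bool) (j : ℕ) (st : Fin w), i ≤ j → B'.walk j st l = B.walk j st l := by
    intro l
    induction l with
    | nil => intro j st _; rfl
    | cons b t ih =>
      intro j st h
      show B'.walk (j+1) (B'.trans j st b) t = B.walk (j+1) (B.trans j st b) t
      have h1 : B'.trans j st b = B.trans j st b := by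
        show (if j < i then st else B.trans j st b) = _
        rw [if_neg (by omega)]
      rw [h1, ih (j+1) _ (by omega)]
  have heval : ∀ x : Fin n → Bool,
      B'.eval x = decide (B.walk i v ((List.ofFn x).drop i) = u) := by
    intro x
    have hsplit : B'.walk 0 v (List.ofFn x) = B.walk i v ((List.ofFn x).drop i) := by
      have hlen : ((List.ofFn x).take i).length = i := by
        simp [List.length_take, hi]
      have h1 := walk_append B' ((List.ofFn x).take i) ((List.ofFn x).drop i) 0 v
      rw [List.take_append_drop, hlen, Nat.zero_add] at h1
      have h2 : B'.walk 0 v ((List.ofFn x).take i) = v := hwlt _ 0 v (by rw [hlen]; omega)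
      rw [h2] at h1
      rw [h1]
      exact hwge _ _ _ le_rfl
    simp only [OBP.eval, hsplit]
    congr 1
    show (B'.walk 0 v (List.ofFn x) ∈ ({u} : Finset (Fin w))) = _
    rw [hsplit, Finset.mem_singleton]
  have hmem : B'.eval ∈ permClassSingle n := by
    refine ⟨w, B', ?_, by simp [hB'], rfl⟩
    intro j hj b
    by_cases hji : j < i
    · have : (fun st => B'.trans j st b) = id := by
        funext st; show (if j < i then st else B.trans j st b) = st; rw [if_pos hji]
      rw [this]; exact Function.bijective_id
    · have : (fun st => B'.trans j st b) = (fun st => B.trans j st b) := by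
        funext st; show (if j < i then st else B.trans j st b) = _; rw [if_neg hji]
      rw [this]; exact hB j hj b
  have hfH : ∀ y ∈ H, B'.eval y = false := by
    intro y hy
    rw [heval y]
    simp only [decide_eq_false_iff_not]
    intro hwalk
    apply hv
    simp only [OBP.hitSet, Finset.mem_filter, Finset.mem_univ, true_and]
    exact ⟨y, hy, hwalk ▸ hu⟩
  have hfrac : acceptFrac B'.eval ≤ δ / (n * a) := by
    by_contra hcon
    push_neg at hcon
    obtain ⟨y, hy, hfy⟩ := hH B'.eval hmem hcon
    rw [hfH y hy] at hfy
    exact Bool.false_ne_true hfy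
  -- count of full inputs equals 2^i times the suffix count
  have hcount : (univ.filter fun x : Fin n → Bool => B'.eval x = true).card
      = 2 ^ i * (univ.filter fun s : Fin (n - i) → Bool => B.walk i v (List.ofFn s) = u).card := by
    have hfilt : (univ.filter fun x : Fin n → Bool => B'.eval x = true)
        = univ.filter fun x : Fin n → Bool =>
            (fun _ : Fin i → Bool => True) (pre i hi x)
              ∧ (fun s => B.walk i v (List.ofFn s) = u) (suf i x) := by
      apply Finset.filter_congr
      intro x _
      rw [heval x, drop_eq_suf]
      simp
    rw [hfilt, card_split i hi (fun _ => True) (fun s => B.walk i v (List.ofFn s) = u)]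
    congr 1
    simp
  have h2n : (0:ℝ) < 2 ^ n := by positivity
  have hle : ((univ.filter fun x : Fin n → Bool => B'.eval x = true).card : ℝ)
      ≤ (δ / (n * a)) * 2 ^ n := by
    have := hfrac
    rw [acceptFrac, div_le_iff₀ h2n] at this
    exact this
  rw [hcount] at hle
  push_cast at hle
  have hpow : (2:ℝ) ^ n = 2 ^ i * 2 ^ (n - i) := by
    rw [← pow_add]
    congr 1
    omega
  rw [hpow] at hle
  have h2i : (0:ℝ) < 2 ^ i := by positivity
  nlinarith [h2i]

end Stmt8Aux

open Finset Stmt8Aux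

/-- If `H` is a deterministic `δ/(n·a)`-hitter for unbounded-width permutation branching
programs with a single accept state, then the induced hit function of any permutation
branching program with at most `a` accept states approximates its acceptance probability
to within `δ`. -/
theorem stmt8 {n a : ℕ} (hn : 1 ≤ n) (ha : 1 ≤ a) (δ : ℝ) (hδ : 0 < δ)
    (H : Finset (Fin n → Bool))
    (hH : IsHitter (permClassSingle n) H (δ / (n * a)))
    {w : ℕ} (B : OBP n w) (hB : B.IsPerm) (hacc : B.accept.card ≤ a) :
    |acceptFrac (B.hitFun H) - B.acceptProb| ≤ δ := by
  have hn' : (0:ℝ) < n := by exact_mod_cast hn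
  have ha' : (0:ℝ) < a := by exact_mod_cast ha
  set ε : ℝ := δ / (n * a) with hεdef
  have hε : 0 < ε := div_pos hδ (mul_pos hn' ha')
  have h2n : (0:ℝ) < 2 ^ n := by positivity
  -- hitFun implies eval
  have himp : ∀ x, B.hitFun H x = true → B.eval x = true := by
    intro x hx
    simp only [OBP.hitFun, decide_eq_true_eq] at hx
    have h := hx n le_rfl
    rw [List.take_of_length_le (by simp)] at h
    simp only [OBP.hitSet, Finset.mem_filter] at h
    obtain ⟨y, hy, hwy⟩ := h.2
    rw [List.drop_eq_nil_of_le (by simp)] at hwy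
    simp only [OBP.eval, decide_eq_true_eq]
    exact hwy
  -- the difference set
  set D := Finset.univ.filter
    (fun x : Fin n → Bool => B.eval x = true ∧ ¬ B.hitFun H x = true) with hD
  have hcardsplit : (univ.filter fun x : Fin n → Bool => B.eval x = true).card
      = (univ.filter fun x : Fin n → Bool => B.hitFun H x = true).card + D.card := by
    rw [← Finset.card_filter_add_card_filter_not
      (p := fun x : Fin n → Bool => B.hitFun H x = true)
      (s := univ.filter (fun x : Fin n → Bool => B.eval x = true))]
    congr 1
    · rw [Finset.filter_filter]
      apply congrArg Finset.card
      apply Finset.filter_congr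
      intro x _
      exact ⟨And.right, fun h => ⟨himp x h, h⟩⟩
    · rw [hD, Finset.filter_filter]
  -- per-layer bad sets
  set S : ℕ → Finset (Fin n → Bool) := fun i => univ.filter (fun x =>
      B.eval x = true ∧ B.walk 0 B.start ((List.ofFn x).take i) ∉ B.hitSet H i) with hS
  have hDsub : D ⊆ (Finset.range n).biUnion S := by
    intro x hx
    simp only [hD, Finset.mem_filter, Finset.mem_univ, true_and] at hx
    obtain ⟨hev, hnh⟩ := hx
    simp only [Finset.mem_biUnion, Finset.mem_range]
    by_cases hHne : H.Nonempty
    · simp only [OBP.hitFun, decide_eq_true_eq] at hnh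
      push_neg at hnh
      obtain ⟨i, hin, hout⟩ := hnh
      have hilt : i < n := by
        rcases Nat.lt_or_ge i n with h | h
        · exact h
        · exfalso
          have hie : i = n := le_antisymm hin h
          subst hie
          apply hout
          rw [List.take_of_length_le (by simp)]
          simp only [OBP.hitSet, Finset.mem_filter]
          refine ⟨Finset.mem_univ _, ?_⟩
          obtain ⟨y0, hy0⟩ := hHne
          refine ⟨y0, hy0, ?_⟩
          rw [List.drop_eq_nil_of_le (by simp)]
          simp only [OBP.eval, decide_eq_true_eq] at hev
          exact hev
      refine ⟨i, hilt, ?_⟩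
      simp only [hS, Finset.mem_filter, Finset.mem_univ, true_and]
      exact ⟨hev, hout⟩
    · refine ⟨0, by omega, ?_⟩
      rw [Finset.not_nonempty_iff_eq_empty] at hHne
      simp only [hS, Finset.mem_filter, Finset.mem_univ, true_and]
      refine ⟨hev, ?_⟩
      simp [OBP.hitSet, hHne]
  -- per-layer cardinality bound
  have hScard : ∀ i, i < n → ((S i).card : ℝ) ≤ a * ε * 2 ^ n := by
    intro i hilt
    have hi : i ≤ n := le_of_lt hilt
    set T : Fin w → Finset (Fin n → Bool) := fun v => univ.filter (fun x =>
      B.walk 0 B.start ((List.ofFn x).take i) = v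
        ∧ B.walk i v ((List.ofFn x).drop i) ∈ B.accept) with hT
    set K := univ.filter (fun v : Fin w => v ∉ B.hitSet H i) with hK
    have hSsub : S i ⊆ K.biUnion T := by
      intro x hx
      simp only [hS, Finset.mem_filter, Finset.mem_univ, true_and] at hx
      obtain ⟨hev, hout⟩ := hx
      refine Finset.mem_biUnion.2
        ⟨B.walk 0 B.start ((List.ofFn x).take i), by simp [hK, hout], ?_⟩
      simp only [hT, Finset.mem_filter, Finset.mem_univ, true_and, eq_self_iff_true]
      simp only [OBP.eval, decide_eq_true_eq] at hev
      have h1 := walk_append B ((List.ofFn x).take i) ((List.ofFn x).drop i) 0 B.start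
      rw [List.take_append_drop] at h1
      have hlen : ((List.ofFn x).take i).length = i := by simp [hi]
      rw [hlen, Nat.zero_add] at h1
      rw [← h1]
      exact hev
    -- prefix and suffix counts
    set Pv : Fin w → ℕ := fun v =>
      (univ.filter fun p : Fin i → Bool => B.walk 0 B.start (List.ofFn p) = v).card with hPv
    set Qv : Fin w → ℕ := fun v =>
      (univ.filter fun s : Fin (n - i) → Bool => B.walk i v (List.ofFn s) ∈ B.accept).card
      with hQv
    have hTQ : ∀ v, (T v).card = Pv v * Qv v := by
      intro v
      have heq : T v = univ.filter (fun x : Fin n → Bool =>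
          (fun p => B.walk 0 B.start (List.ofFn p) = v) (pre i hi x)
            ∧ (fun s => B.walk i v (List.ofFn s) ∈ B.accept) (suf i x)) := by
        apply Finset.filter_congr
        intro x _
        rw [take_eq_pre hi, drop_eq_suf]
      rw [heq, card_split i hi (fun p => B.walk 0 B.start (List.ofFn p) = v)
        (fun s => B.walk i v (List.ofFn s) ∈ B.accept)]
    have hQbound : ∀ v ∈ K, (Qv v : ℝ) ≤ a * (ε * 2 ^ (n - i)) := by
      intro v hv
      simp only [hK, Finset.mem_filter, Finset.mem_univ, true_and] at hv
      have hsub : (univ.filter fun s : Fin (n - i) → Bool => B.walk i v (List.ofFn s) ∈ B.accept)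
          ⊆ B.accept.biUnion (fun u => univ.filter fun s : Fin (n - i) → Bool =>
              B.walk i v (List.ofFn s) = u) := by
        intro s hs
        simp only [Finset.mem_filter, Finset.mem_univ, true_and] at hs
        exact Finset.mem_biUnion.2 ⟨_, hs, by simp⟩
      have h1 : Qv v ≤ ∑ u ∈ B.accept,
          (univ.filter fun s : Fin (n - i) → Bool => B.walk i v (List.ofFn s) = u).card :=
        le_trans (Finset.card_le_card hsub) (Finset.card_biUnion_le)
      have h2 : ((Qv v : ℝ)) ≤ ∑ u ∈ B.accept, (ε * 2 ^ (n - i)) := by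
        calc ((Qv v : ℝ)) ≤ ∑ u ∈ B.accept,
            ((univ.filter fun s : Fin (n - i) → Bool =>
              B.walk i v (List.ofFn s) = u).card : ℝ) := by exact_mod_cast h1
          _ ≤ ∑ u ∈ B.accept, (ε * 2 ^ (n - i)) := by
            apply Finset.sum_le_sum
            intro u hu
            exact suffix_count_le hn ha hδ H hH B hB i hi v u hv hu
      rw [Finset.sum_const, nsmul_eq_mul] at h2
      calc ((Qv v : ℝ)) ≤ (B.accept.card : ℝ) * (ε * 2 ^ (n - i)) := h2
        _ ≤ a * (ε * 2 ^ (n - i)) := by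
          apply mul_le_mul_of_nonneg_right _ (by positivity)
          exact_mod_cast hacc
    have hPsum : ∑ v ∈ K, (Pv v : ℝ) ≤ 2 ^ i := by
      have hfib : (univ : Finset (Fin i → Bool)).card = ∑ v ∈ univ, Pv v :=
        Finset.card_eq_sum_card_fiberwise
          (f := fun p : Fin i → Bool => B.walk 0 B.start (List.ofFn p))
          (fun _ _ => Finset.mem_univ _)
      have h1 : ∑ v ∈ K, Pv v ≤ ∑ v ∈ univ, Pv v :=
        Finset.sum_le_sum_of_subset (Finset.subset_univ K)
      have h2 : ((∑ v ∈ K, Pv v : ℕ) : ℝ) ≤ ((∑ v ∈ univ, Pv v : ℕ) : ℝ) := by exact_mod_cast h1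
      rw [← hfib] at h2
      push_cast at h2 ⊢
      calc ∑ v ∈ K, (Pv v : ℝ) ≤ ((univ : Finset (Fin i → Bool)).card : ℝ) := h2
        _ = 2 ^ i := by simp [Finset.card_univ]
    calc ((S i).card : ℝ) ≤ ((K.biUnion T).card : ℝ) := by
          exact_mod_cast Finset.card_le_card hSsub
      _ ≤ ∑ v ∈ K, ((T v).card : ℝ) := by exact_mod_cast Finset.card_biUnion_le
      _ ≤ ∑ v ∈ K, (Pv v : ℝ) * (a * (ε * 2 ^ (n - i))) := by
          apply Finset.sum_le_sum
          intro v hv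
          rw [hTQ v]
          push_cast
          exact mul_le_mul_of_nonneg_left (hQbound v hv) (by positivity)
      _ = (∑ v ∈ K, (Pv v : ℝ)) * (a * (ε * 2 ^ (n - i))) := by
          rw [← Finset.sum_mul]
      _ ≤ 2 ^ i * (a * (ε * 2 ^ (n - i))) := by
          apply mul_le_mul_of_nonneg_right hPsum (by positivity)
      _ = a * ε * (2 ^ i * 2 ^ (n - i)) := by ring
      _ = a * ε * 2 ^ n := by rw [← pow_add]; congr 2; omega
  -- sum over layers
  have hDcard : (D.card : ℝ) ≤ δ * 2 ^ n := by
    have h1 : (D.card : ℝ) ≤ ∑ i ∈ Finset.range n, ((S i).card : ℝ) := by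
      calc (D.card : ℝ) ≤ (((Finset.range n).biUnion S).card : ℝ) := by
            exact_mod_cast Finset.card_le_card hDsub
        _ ≤ ∑ i ∈ Finset.range n, ((S i).card : ℝ) := by
            exact_mod_cast Finset.card_biUnion_le
    have h2 : ∑ i ∈ Finset.range n, ((S i).card : ℝ)
        ≤ ∑ i ∈ Finset.range n, (a * ε * 2 ^ n) := by
      apply Finset.sum_le_sum
      intro i hi
      exact hScard i (Finset.mem_range.mp hi)
    rw [Finset.sum_const, Finset.card_range, nsmul_eq_mul] at h2
    have h3 : (n : ℝ) * (a * ε * 2 ^ n) = δ * 2 ^ n := by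
      rw [hεdef]
      field_simp
    linarith
  -- conclude
  have habs : acceptFrac (B.hitFun H) - B.acceptProb = -(↑D.card / 2 ^ n) := by
    rw [acceptFrac, OBP.acceptProb, hcardsplit]
    push_cast
    ring
  rw [habs, abs_neg, abs_of_nonneg (by positivity)]
  rw [div_le_iff₀ h2n]
  linarith
end

section
/- Let H ⊆ {0,1}^n be a deterministic δ-hitter for the class of permutation branching programs of length n, arbitrary width, with a single accept state, and let B be a permutation branching program of length n and width w with accept set V_acc of size at most a. Then for every k ∈ {0,…,n} and every state v in layer n−k that does not lie in the hit set K_{n−k}, the fraction of z ∈ {0,1}^k with B[v,z] ∈ V_acc is at most a·δ. -/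
namespace OBP

variable {n w : ℕ}

lemma walk_append' (B : OBP n w) (l1 l2 : List Bool) (i : ℕ) (v : Fin w) :
    B.walk i v (l1 ++ l2) = B.walk (i + l1.length) (B.walk i v l1) l2 := by
  induction l1 generalizing i v with
  | nil => simp [walk]
  | cons b l ih =>
      have h : i + (b :: l).length = (i + 1) + l.length := by
        simp only [List.length_cons]; omega
      rw [List.cons_append, h]
      exact ih (i + 1) (B.trans i v b)

lemma walk_congr' (B B' : OBP n w) (l : List Bool) (i : ℕ) (v : Fin w)
    (h : ∀ j, i ≤ j → ∀ s b, B.trans j s b = B'.trans j s b) :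
    B.walk i v l = B'.walk i v l := by
  induction l generalizing i v with
  | nil => rfl
  | cons b l ih =>
      simp only [walk]
      rw [h i le_rfl]
      exact ih (i + 1) _ fun j hj s b => h j (by omega) s b

end OBP

lemma ofFn_cast_aux {α : Type*} {m n : ℕ} (h : m = n) (f : Fin m → α) :
    List.ofFn (fun i : Fin n => f (Fin.cast h.symm i)) = List.ofFn f := by
  subst h
  rfl

lemma count_aux {n m k : ℕ} (hnk : m + k = n) (P : (Fin k → Bool) → Prop)
    [DecidablePred P] :
    (Finset.univ.filter fun x : Fin n → Bool =>
        P (fun j => x (Fin.cast hnk (Fin.natAdd m j)))).card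
      = 2 ^ m * (Finset.univ.filter P).card := by
  classical
  set G : (Fin n → Bool) → (Fin k → Bool) :=
    fun x j => x (Fin.cast hnk (Fin.natAdd m j)) with hG
  set F : (Fin m → Bool) × (Fin k → Bool) → (Fin n → Bool) :=
    fun p i => Fin.append p.1 p.2 (Fin.cast hnk.symm i) with hF
  have hcastcast : ∀ j : Fin (m + k), Fin.cast hnk.symm (Fin.cast hnk j) = j := by
    intro j; ext; simp
  have hGF : ∀ p, G (F p) = p.2 := by
    intro p
    funext j
    simp only [hG, hF, hcastcast, Fin.append_right]
  have hF1 : ∀ p (i : Fin m), F p (Fin.cast hnk (Fin.castAdd k i)) = p.1 i := by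
    intro p i
    simp only [hF, hcastcast, Fin.append_left]
  have hFsurj : ∀ x : Fin n → Bool, F (fun i => x (Fin.cast hnk (Fin.castAdd k i)), G x) = x := by
    intro x
    funext i
    have hi : i = Fin.cast hnk (Fin.cast hnk.symm i) := by ext; simp
    rw [hi]
    generalize (Fin.cast hnk.symm i) = j
    induction j using Fin.addCases with
    | left i0 => simp only [hF, hcastcast, Fin.append_left]
    | right j0 => simp only [hF, hcastcast, Fin.append_right, hG]
  have hFinj : Function.Injective F := by
    intro p q hpq
    have h2 : p.2 = q.2 := by rw [← hGF p, ← hGF q, hpq]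
    have h1 : p.1 = q.1 := by
      funext i
      rw [← hF1 p i, ← hF1 q i, hpq]
    exact Prod.ext h1 h2
  have himg : (Finset.univ.filter fun x : Fin n → Bool => P (G x))
      = Finset.image F (Finset.univ ×ˢ Finset.univ.filter P) := by
    ext x
    simp only [Finset.mem_filter, Finset.mem_univ, true_and, Finset.mem_image,
      Finset.mem_product]
    constructor
    · intro hx
      exact ⟨(fun i => x (Fin.cast hnk (Fin.castAdd k i)), G x), hx, hFsurj x⟩
    · rintro ⟨p, hp, rfl⟩
      rwa [hGF]
  rw [himg, Finset.card_image_of_injective _ hFinj, Finset.card_product]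
  congr 1
  simp [Finset.card_univ]

/-- From any state not in the hit set at layer `n - k`, the probability of reaching an
accept state along a uniformly random string of length `k` is at most `a·δ`, when `H` is a
deterministic `δ`-hitter for unbounded-width single-accept permutation branching programs. -/
theorem stmt10 {n w a : ℕ} (δ : ℝ) (hδ : 0 < δ) (H : Finset (Fin n → Bool))
    (hH : IsHitter (permClassSingle n) H δ)
    (B : OBP n w) (hB : B.IsPerm) (hacc : B.accept.card ≤ a)
    (k : ℕ) (hk : k ≤ n) (v : Fin w) (hv : v ∉ B.hitSet H (n - k)) :
    ((Finset.univ.filter fun z : Fin k → Bool =>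
        B.walk (n - k) v (List.ofFn z) ∈ B.accept).card : ℝ) / 2 ^ k ≤ a * δ :=  by
  classical
  have hnk : (n - k) + k = n := Nat.sub_add_cancel hk
  set G : (Fin n → Bool) → (Fin k → Bool) :=
    fun x j => x (Fin.cast hnk (Fin.natAdd (n - k) j)) with hG
  -- drop (n-k) of ofFn x is ofFn (G x)
  have hdrop : ∀ x : Fin n → Bool, (List.ofFn x).drop (n - k) = List.ofFn (G x) := by
    intro x
    have hfun : (fun i : Fin n => x (Fin.cast hnk (Fin.cast hnk.symm i))) = x := by
      funext i
      congr 1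
    have h1 : List.ofFn x
        = List.ofFn (fun j : Fin ((n - k) + k) => x (Fin.cast hnk j)) := by
      conv_lhs => rw [← hfun]
      exact ofFn_cast_aux hnk (fun j : Fin ((n - k) + k) => x (Fin.cast hnk j))
    rw [h1, List.ofFn_add]
    exact List.drop_left' (by simp)
  -- the one-accept-state programs
  have hv' : ∀ y ∈ H, B.walk (n - k) v ((List.ofFn y).drop (n - k)) ∉ B.accept := by
    simp only [OBP.hitSet, Finset.mem_filter, Finset.mem_univ, true_and, not_exists,
      not_and] at hv
    exact fun y hy => hv y hy
  set trans' : ℕ → Fin w → Bool → Fin w :=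
    fun i s b => if i < n - k then s else B.trans i s b with htrans'
  have hwalkpre : ∀ (Bu : OBP n w), Bu.trans = trans' →
      ∀ (l : List Bool) (i : ℕ) (s : Fin w), i + l.length ≤ n - k → Bu.walk i s l = s := by
    intro Bu hBu l
    induction l with
    | nil => intro i s _; rfl
    | cons b t ih =>
        intro i s hle
        simp only [List.length_cons] at hle
        simp only [OBP.walk, hBu, htrans']
        rw [if_pos (by omega)]
        exact ih (i + 1) s (by omega)
  have hwalk : ∀ (Bu : OBP n w), Bu.trans = trans' → Bu.start = v →
      ∀ x : Fin n → Bool,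
        Bu.walk 0 Bu.start (List.ofFn x) = B.walk (n - k) v (List.ofFn (G x)) := by
    intro Bu hBu hstart x
    rw [← hdrop x, ← List.take_append_drop (n - k) (List.ofFn x), Bu.walk_append']
    have hlen : (List.take (n - k) (List.ofFn x)).length = n - k := by
      simp [Nat.sub_le n k, hk]
    rw [hwalkpre Bu hBu _ 0 _ (by simp [hlen]), hstart, hlen, Nat.zero_add,
      List.drop_left' hlen]
    apply OBP.walk_congr'
    intro j hj s b
    simp only [hBu, htrans']
    rw [if_neg (by omega : ¬ j < n - k)]
  -- single-accept probability bound
  have hsingle : ∀ u ∈ B.accept,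
      ((Finset.univ.filter fun z : Fin k → Bool =>
          B.walk (n - k) v (List.ofFn z) = u).card : ℝ) / 2 ^ k ≤ δ := by
    intro u hu
    set Bu : OBP n w := ⟨v, trans', {u}⟩ with hBu
    have hperm : Bu.IsPerm := by
      intro i hi b
      simp only [hBu, htrans']
      by_cases hik : i < n - k
      · simp only [if_pos hik]; exact Function.bijective_id
      · simp only [if_neg hik]; exact hB i hi b
    have heval : ∀ x : Fin n → Bool,
        Bu.eval x = true ↔ B.walk (n - k) v (List.ofFn (G x)) = u := by
      intro x
      rw [OBP.eval, decide_eq_true_iff,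
        hwalk Bu rfl rfl x]
      simp [hBu]
    have hmem : Bu.eval ∈ permClassSingle n := ⟨w, Bu, hperm, by simp [hBu], rfl⟩
    have hnohit : ¬ ∃ y ∈ H, Bu.eval y = true := by
      rintro ⟨y, hy, hey⟩
      rw [heval] at hey
      exact hv' y hy (by rw [hdrop, hey]; exact hu)
    have hle : acceptFrac Bu.eval ≤ δ := by
      by_contra hgt
      exact hnohit (hH _ hmem (lt_of_not_ge hgt))
    have hcard : (Finset.univ.filter fun x : Fin n → Bool => Bu.eval x = true).card
        = 2 ^ (n - k) * (Finset.univ.filter fun z : Fin k → Bool =>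
            B.walk (n - k) v (List.ofFn z) = u).card := by
      rw [show (Finset.univ.filter fun x : Fin n → Bool => Bu.eval x = true)
          = Finset.univ.filter fun x : Fin n → Bool =>
              B.walk (n - k) v (List.ofFn (G x)) = u from
        Finset.filter_congr fun x _ => by simp [heval x]]
      exact count_aux hnk (fun z => B.walk (n - k) v (List.ofFn z) = u)
    rw [acceptFrac, hcard] at hle
    calc ((Finset.univ.filter fun z : Fin k → Bool =>
            B.walk (n - k) v (List.ofFn z) = u).card : ℝ) / 2 ^ k
        = ((2 ^ (n - k) * (Finset.univ.filter fun z : Fin k → Bool =>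
            B.walk (n - k) v (List.ofFn z) = u).card : ℕ) : ℝ) / 2 ^ n := by
          have h2n : (2 : ℝ) ^ n = 2 ^ (n - k) * 2 ^ k := by rw [← pow_add, hnk]
          rw [h2n]
          push_cast
          rw [mul_div_mul_left _ _ (by positivity : (2 : ℝ) ^ (n - k) ≠ 0)]
      _ ≤ δ := hle
  -- sum over accept states
  have hsplit : (Finset.univ.filter fun z : Fin k → Bool =>
        B.walk (n - k) v (List.ofFn z) ∈ B.accept).card
      = ∑ u ∈ B.accept, (Finset.univ.filter fun z : Fin k → Bool =>
          B.walk (n - k) v (List.ofFn z) = u).card := by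
    rw [Finset.card_eq_sum_card_fiberwise
      (f := fun z : Fin k → Bool => B.walk (n - k) v (List.ofFn z)) (t := B.accept)
      (s := Finset.univ.filter fun z : Fin k → Bool => B.walk (n - k) v (List.ofFn z) ∈ B.accept)
      (fun z hz => (Finset.mem_filter.mp hz).2)]
    refine Finset.sum_congr rfl fun u hu => ?_
    congr 1
    ext z
    simp only [Finset.mem_filter, Finset.mem_univ, true_and]
    exact ⟨fun h => h.2, fun h => ⟨by rw [h]; exact hu, h⟩⟩
  rw [hsplit]
  push_cast
  rw [Finset.sum_div]
  calc (∑ u ∈ B.accept, ((Finset.univ.filter fun z : Fin k → Bool =>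
          B.walk (n - k) v (List.ofFn z) = u).card : ℝ) / 2 ^ k)
      ≤ ∑ u ∈ B.accept, δ := Finset.sum_le_sum fun u hu => hsingle u hu
    _ = B.accept.card * δ := by rw [Finset.sum_const, nsmul_eq_mul]
    _ ≤ a * δ := by
        apply mul_le_mul_of_nonneg_right _ hδ.le
        exact_mod_cast hacc
end

section
/- There exists a constant C > 0 such that for all n, w ≥ 1 and all ε with 0 < ε < 1, there exists a set Q ⊆ {0,1}^n with |Q| ≤ (n·w/ε)^C such that for every ordered branching program B of length n and width w, the average of B over Q estimates the acceptance probability of B to within ε: |(1/|Q|) · Σ_{x∈Q} B(x) − Pr[B(U_n)=1]| ≤ ε. (That is, there exist deterministic averaging ε-samplers for width-w length-n ordered branching programs with polynomial query complexity.) -/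
set_option maxHeartbeats 1000000
set_option linter.unusedSectionVars false


open Finset Real

lemma exp_le_quad {u : ℝ} (h : |u| ≤ 1) : Real.exp u ≤ 1 + u + u ^ 2 := by
  have hb := Real.exp_bound h (n := 2) (by norm_num)
  have h2 : ∑ m ∈ Finset.range 2, u ^ m / m.factorial = 1 + u := by
    simp [Finset.sum_range_succ]
  rw [h2] at hb
  have habs : |u| ^ 2 = u ^ 2 := by rw [← abs_pow, abs_of_nonneg (sq_nonneg u)]
  have h3 : Real.exp u - (1 + u) ≤ u ^ 2 * ((Nat.succ 2) / (Nat.factorial 2 * 2)) := by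
    rw [← habs]; exact le_trans (le_abs_self _) hb
  have h4 : ((Nat.succ 2 : ℝ) / (Nat.factorial 2 * 2)) = 3 / 4 := by
    norm_num [Nat.factorial]
  rw [h4] at h3
  nlinarith [sq_nonneg u]

section Chernoff
open scoped Classical
variable {α : Type*} [Fintype α] [DecidableEq α]

lemma mgf_bound (c : α → ℝ) (hsum : ∑ x, c x = 0) (hb : ∀ x, |c x| ≤ 1)
    {t : ℝ} (ht0 : 0 ≤ t) (ht1 : t ≤ 1) :
    ∑ x, Real.exp (t * c x) ≤ (Fintype.card α) * Real.exp (t ^ 2) := by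
  have h1 : ∑ x, Real.exp (t * c x) ≤ ∑ x, (1 + t * c x + (t * c x) ^ 2) := by
    refine Finset.sum_le_sum fun x _ => exp_le_quad ?_
    rw [abs_mul]
    calc |t| * |c x| ≤ 1 * 1 := by
          refine mul_le_mul ?_ (hb x) (abs_nonneg _) zero_le_one
          rwa [abs_of_nonneg ht0]
      _ = 1 := one_mul 1
  have h2 : ∑ x, (1 + t * c x + (t * c x) ^ 2)
      ≤ (Fintype.card α) * (1 + t ^ 2) := by
    rw [Finset.sum_add_distrib, Finset.sum_add_distrib, ← Finset.mul_sum, hsum, mul_zero]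
    have h3 : ∑ x, (t * c x) ^ 2 ≤ ∑ _x : α, t ^ 2 := by
      refine Finset.sum_le_sum fun x _ => ?_
      rw [mul_pow]
      have : (c x) ^ 2 ≤ 1 := by
        have := hb x; nlinarith [abs_nonneg (c x), sq_abs (c x)]
      nlinarith [sq_nonneg t]
    simp only [Finset.sum_const, Finset.card_univ, nsmul_eq_mul, mul_one] at *
    ring_nf
    ring_nf at h3
    linarith
  have h4 : (Fintype.card α : ℝ) * (1 + t ^ 2) ≤ (Fintype.card α) * Real.exp (t ^ 2) := by
    have := Real.add_one_le_exp (t ^ 2)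
    have : (1 : ℝ) + t ^ 2 ≤ Real.exp (t ^ 2) := by linarith
    exact mul_le_mul_of_nonneg_left this (by positivity)
  linarith

lemma count_tail (m : ℕ) (c : α → ℝ) (a t : ℝ) (ht : 0 ≤ t) :
    ((Finset.univ.filter fun q : Fin m → α => a ≤ ∑ i, c (q i)).card : ℝ) * Real.exp (t * a)
      ≤ (∑ x, Real.exp (t * c x)) ^ m := by
  calc ((Finset.univ.filter fun q : Fin m → α => a ≤ ∑ i, c (q i)).card : ℝ) * Real.exp (t * a)
      = ∑ _q ∈ Finset.univ.filter fun q : Fin m → α => a ≤ ∑ i, c (q i), Real.exp (t * a) := by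
        rw [Finset.sum_const, nsmul_eq_mul]
    _ ≤ ∑ q ∈ Finset.univ.filter fun q : Fin m → α => a ≤ ∑ i, c (q i),
          ∏ i, Real.exp (t * c (q i)) := by
        refine Finset.sum_le_sum fun q hq => ?_
        rw [← Real.exp_sum, ← Finset.mul_sum]
        have hq' := (Finset.mem_filter.1 hq).2
        exact Real.exp_le_exp.2 (mul_le_mul_of_nonneg_left hq' ht)
    _ ≤ ∑ q : Fin m → α, ∏ i, Real.exp (t * c (q i)) :=
        Finset.sum_le_sum_of_subset_of_nonneg (Finset.filter_subset _ _)
          (fun q _ _ => Finset.prod_nonneg fun i _ => (Real.exp_pos _).le)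
    _ = (∑ x, Real.exp (t * c x)) ^ m := (Fintype.sum_pow (fun x => Real.exp (t * c x)) m).symm

end Chernoff
section Chernoff2
open scoped Classical
open Finset
variable {α : Type*} [Fintype α] [DecidableEq α]

lemma chernoff_one (m : ℕ) (c : α → ℝ) (hsum : ∑ x, c x = 0) (hb : ∀ x, |c x| ≤ 1)
    {ε : ℝ} (hε0 : 0 < ε) (hε1 : ε ≤ 1) :
    ((Finset.univ.filter fun q : Fin m → α => (m : ℝ) * ε ≤ ∑ i, c (q i)).card : ℝ)
      ≤ (Fintype.card α : ℝ) ^ m * Real.exp (-(m * ε ^ 2 / 4)) := by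
  set t : ℝ := ε / 2 with ht
  have ht0 : 0 ≤ t := by positivity
  have ht1 : t ≤ 1 := by rw [ht]; linarith
  have h1 := count_tail m c ((m : ℝ) * ε) t ht0
  have h2 := mgf_bound c hsum hb ht0 ht1
  have h3 : (∑ x, Real.exp (t * c x)) ^ m ≤ ((Fintype.card α) * Real.exp (t ^ 2)) ^ m := by
    refine pow_le_pow_left₀ ?_ h2 m
    exact Finset.sum_nonneg fun x _ => (Real.exp_pos _).le
  have h4 : ((Fintype.card α : ℝ) * Real.exp (t ^ 2)) ^ m
      = (Fintype.card α : ℝ) ^ m * Real.exp (m * t ^ 2) := by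
    rw [mul_pow, ← Real.exp_nat_mul]
  have h5 : ((Finset.univ.filter fun q : Fin m → α => (m : ℝ) * ε ≤ ∑ i, c (q i)).card : ℝ)
      * Real.exp (t * ((m : ℝ) * ε))
      ≤ (Fintype.card α : ℝ) ^ m * Real.exp (m * t ^ 2) := by
    rw [← h4]; exact le_trans h1 h3
  have hepos : (0 : ℝ) < Real.exp (t * ((m : ℝ) * ε)) := Real.exp_pos _
  rw [← le_div_iff₀ hepos] at h5
  refine le_trans h5 ?_
  rw [div_eq_mul_inv, ← Real.exp_neg, mul_assoc, ← Real.exp_add]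
  have : (m : ℝ) * t ^ 2 + -(t * ((m : ℝ) * ε)) = -(m * ε ^ 2 / 4) := by
    rw [ht]; ring
  rw [this]

lemma chernoff_abs (m : ℕ) (c : α → ℝ) (hsum : ∑ x, c x = 0) (hb : ∀ x, |c x| ≤ 1)
    {ε : ℝ} (hε0 : 0 < ε) (hε1 : ε ≤ 1) :
    ((Finset.univ.filter fun q : Fin m → α => (m : ℝ) * ε < |∑ i, c (q i)|).card : ℝ)
      ≤ 2 * ((Fintype.card α : ℝ) ^ m * Real.exp (-(m * ε ^ 2 / 4))) := by
  have hsub : (Finset.univ.filter fun q : Fin m → α => (m : ℝ) * ε < |∑ i, c (q i)|)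
      ⊆ (Finset.univ.filter fun q : Fin m → α => (m : ℝ) * ε ≤ ∑ i, c (q i))
        ∪ (Finset.univ.filter fun q : Fin m → α => (m : ℝ) * ε ≤ ∑ i, (fun x => -c x) (q i)) := by
    intro q hq
    have hq' := (Finset.mem_filter.1 hq).2
    rw [Finset.mem_union, Finset.mem_filter, Finset.mem_filter]
    rcases abs_cases (∑ i, c (q i)) with ⟨he, _⟩ | ⟨he, _⟩
    · exact Or.inl ⟨Finset.mem_univ q, by rw [he] at hq'; linarith⟩
    · refine Or.inr ⟨Finset.mem_univ q, ?_⟩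
      simp only [Finset.sum_neg_distrib]
      rw [he] at hq'; linarith
  have h1 := chernoff_one m c hsum hb hε0 hε1
  have h2 := chernoff_one m (fun x => -c x) (by simpa using hsum) (fun x => by simpa using hb x) hε0 hε1
  have hcard := Finset.card_le_card hsub
  have hcard2 := Finset.card_union_le
    (Finset.univ.filter fun q : Fin m → α => (m : ℝ) * ε ≤ ∑ i, c (q i))
    (Finset.univ.filter fun q : Fin m → α => (m : ℝ) * ε ≤ ∑ i, (fun x => -c x) (q i))
  have : ((Finset.univ.filter fun q : Fin m → α => (m : ℝ) * ε < |∑ i, c (q i)|).card : ℝ)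
      ≤ ((Finset.univ.filter fun q : Fin m → α => (m : ℝ) * ε ≤ ∑ i, c (q i)).card : ℝ)
        + ((Finset.univ.filter fun q : Fin m → α => (m : ℝ) * ε ≤ ∑ i, (fun x => -c x) (q i)).card : ℝ) := by
    exact_mod_cast le_trans hcard hcard2
  linarith

end Chernoff2
section Noninj
open scoped Classical
open Finset
variable {α : Type*} [Fintype α] [DecidableEq α]

lemma card_pair_eq (m : ℕ) (i j : Fin m) (hij : i ≠ j) :
    (Finset.univ.filter fun q : Fin m → α => q i = q j).card
      ≤ (Fintype.card α) ^ (m - 1) := by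
  have hcard : Fintype.card ({k : Fin m // k ≠ j} → α) = (Fintype.card α) ^ (m - 1) := by
    rw [Fintype.card_fun]
    congr 1
    rw [Fintype.card_subtype_compl, Fintype.card_fin, Fintype.card_subtype_eq]
  calc (Finset.univ.filter fun q : Fin m → α => q i = q j).card
      ≤ (Finset.univ : Finset ({k : Fin m // k ≠ j} → α)).card := by
        refine Finset.card_le_card_of_injOn (fun q => fun k => q k.1) (fun _ _ => Finset.mem_univ _) ?_
        intro q hq q' hq' he
        have hq1 := (Finset.mem_filter.1 hq).2
        have hq2 := (Finset.mem_filter.1 hq').2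
        funext k
        by_cases hk : k = j
        · subst hk
          rw [← hq1, ← hq2]
          have := congrFun he ⟨i, hij⟩
          exact this
        · exact congrFun he ⟨k, hk⟩
    _ = (Fintype.card α) ^ (m - 1) := by rw [Finset.card_univ, hcard]

lemma card_noninj (m : ℕ) :
    ((Finset.univ.filter fun q : Fin m → α => ¬ Function.Injective q).card : ℝ)
      ≤ (m : ℝ) ^ 2 * (Fintype.card α : ℝ) ^ (m - 1) := by
  have hsub : (Finset.univ.filter fun q : Fin m → α => ¬ Function.Injective q)
      ⊆ (Finset.univ.offDiag).biUnion
          (fun p : Fin m × Fin m => Finset.univ.filter fun q : Fin m → α => q p.1 = q p.2) := by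
    intro q hq
    have hq' := (Finset.mem_filter.1 hq).2
    rw [Function.Injective] at hq'
    push_neg at hq'
    obtain ⟨i, j, hij, hne⟩ := hq'
    refine Finset.mem_biUnion.2 ⟨(i, j), ?_, ?_⟩
    · exact Finset.mem_offDiag.2 ⟨Finset.mem_univ _, Finset.mem_univ _, hne⟩
    · exact Finset.mem_filter.2 ⟨Finset.mem_univ _, hij⟩
  have h1 := Finset.card_le_card hsub
  have h2 := Finset.card_biUnion_le (s := (Finset.univ : Finset (Fin m)).offDiag)
    (t := fun p : Fin m × Fin m => Finset.univ.filter fun q : Fin m → α => q p.1 = q p.2)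
  have h3 : ∑ p ∈ (Finset.univ : Finset (Fin m)).offDiag,
      (Finset.univ.filter fun q : Fin m → α => q p.1 = q p.2).card
      ≤ ∑ _p ∈ (Finset.univ : Finset (Fin m)).offDiag, (Fintype.card α) ^ (m - 1) := by
    refine Finset.sum_le_sum fun p hp => ?_
    exact card_pair_eq m p.1 p.2 (Finset.mem_offDiag.1 hp).2.2
  rw [Finset.sum_const, smul_eq_mul] at h3
  have h4 : (Finset.univ : Finset (Fin m)).offDiag.card ≤ m ^ 2 := by
    have he : (Finset.univ : Finset (Fin m)).offDiag.card = m * m - m := by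
      rw [Finset.offDiag_card, Finset.card_univ, Fintype.card_fin]
    rw [he, sq]
    exact Nat.sub_le _ _
  have : (Finset.univ.filter fun q : Fin m → α => ¬ Function.Injective q).card
      ≤ m ^ 2 * (Fintype.card α) ^ (m - 1) := by
    calc _ ≤ _ := h1
      _ ≤ _ := h2
      _ ≤ _ := h3
      _ ≤ m ^ 2 * (Fintype.card α) ^ (m - 1) :=
        Nat.mul_le_mul_right _ h4
  exact_mod_cast this

end Noninj
noncomputable def indc {α : Type*} (f : α → Bool) (x : α) : ℝ := if f x then 1 else 0

section Exists
open scoped Classical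
open Finset
variable {α : Type*} [Fintype α] [DecidableEq α]

lemma exists_good (𝓕 : Finset (α → Bool)) (m : ℕ) (hm1 : 1 ≤ m) {ε : ℝ} (hε0 : 0 < ε)
    (hε1 : ε ≤ 1)
    (hN : 2 * (𝓕.card : ℝ) * Real.exp (-(m * ε ^ 2 / 4)) < 1 / 2)
    (hm2 : (m : ℝ) ^ 2 ≤ (Fintype.card α : ℝ) / 2) :
    ∃ q : Fin m → α, Function.Injective q ∧
      ∀ f ∈ 𝓕, |(∑ i, indc f (q i)) - m * ((∑ x, indc f x) / (Fintype.card α : ℝ))| ≤ m * ε := by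
  set K : ℝ := (Fintype.card α : ℝ) with hKdef
  have hK2 : 2 ≤ K := by
    have : (1 : ℝ) ≤ (m : ℝ) ^ 2 := by
      have : (1 : ℝ) ≤ (m : ℝ) := by exact_mod_cast hm1
      nlinarith
    linarith
  have hK0 : 0 < K := by linarith
  set μ : (α → Bool) → ℝ := fun f => (∑ x, indc f x) / K with hμdef
  set c : (α → Bool) → α → ℝ := fun f x => indc f x - μ f with hcdef
  have hsum : ∀ f, ∑ x, c f x = 0 := by
    intro f
    simp only [hcdef, Finset.sum_sub_distrib, Finset.sum_const, Finset.card_univ, nsmul_eq_mul]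
    rw [hμdef]
    field_simp
    simp [hKdef]
  have hb : ∀ f x, |c f x| ≤ 1 := by
    intro f x
    have h01 : ∀ y, (0:ℝ) ≤ indc f y ∧ indc f y ≤ 1 := by
      intro y; unfold indc; split <;> norm_num
    have hμ0 : 0 ≤ μ f := by
      rw [hμdef]
      exact div_nonneg (Finset.sum_nonneg fun y _ => (h01 y).1) hK0.le
    have hμ1 : μ f ≤ 1 := by
      rw [hμdef, div_le_one hK0]
      calc ∑ x, indc f x ≤ ∑ _x : α, (1:ℝ) := Finset.sum_le_sum fun y _ => (h01 y).2
        _ = K := by simp [hKdef]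
    rw [abs_le, hcdef]
    have := (h01 x).1
    have := (h01 x).2
    constructor <;> simp only [] <;> linarith
  -- the bad set
  set Bad : Finset (Fin m → α) :=
    Finset.univ.filter (fun q : Fin m → α =>
      (¬ Function.Injective q) ∨ ∃ f ∈ 𝓕, (m : ℝ) * ε < |∑ i, c f (q i)|) with hBad
  have hcard1 : (Bad.card : ℝ) < K ^ m := by
    have hsplit : Bad ⊆ (Finset.univ.filter fun q : Fin m → α => ¬ Function.Injective q)
        ∪ (Finset.univ.filter fun q : Fin m → α => ∃ f ∈ 𝓕, (m : ℝ) * ε < |∑ i, c f (q i)|) := by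
      rw [hBad, ← Finset.filter_or]
    have hA : ((Finset.univ.filter fun q : Fin m → α => ¬ Function.Injective q).card : ℝ)
        ≤ K ^ m / 2 := by
      refine le_trans (card_noninj m) ?_
      have hpow : K ^ m = K ^ (m - 1) * K := by
        conv_lhs => rw [← Nat.sub_add_cancel hm1]
        rw [pow_succ]
      have hKm1 : (0:ℝ) ≤ K ^ (m - 1) := by positivity
      rw [hpow]
      nlinarith
    have hB : ((Finset.univ.filter fun q : Fin m → α =>
        ∃ f ∈ 𝓕, (m : ℝ) * ε < |∑ i, c f (q i)|).card : ℝ) < K ^ m / 2 := by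
      have hsub2 : (Finset.univ.filter fun q : Fin m → α =>
          ∃ f ∈ 𝓕, (m : ℝ) * ε < |∑ i, c f (q i)|)
          ⊆ 𝓕.biUnion (fun f => Finset.univ.filter fun q : Fin m → α =>
              (m : ℝ) * ε < |∑ i, c f (q i)|) := by
        intro q hq
        obtain ⟨f, hf, hfq⟩ := (Finset.mem_filter.1 hq).2
        exact Finset.mem_biUnion.2 ⟨f, hf, Finset.mem_filter.2 ⟨Finset.mem_univ _, hfq⟩⟩
      have h1 := Finset.card_le_card hsub2
      have h2 := Finset.card_biUnion_le (s := 𝓕)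
        (t := fun f => Finset.univ.filter fun q : Fin m → α => (m : ℝ) * ε < |∑ i, c f (q i)|)
      have h3 : (∑ f ∈ 𝓕, ((Finset.univ.filter fun q : Fin m → α =>
          (m : ℝ) * ε < |∑ i, c f (q i)|).card : ℝ))
          ≤ (𝓕.card : ℝ) * (2 * (K ^ m * Real.exp (-(m * ε ^ 2 / 4)))) := by
        refine le_trans (Finset.sum_le_sum fun f _ =>
          chernoff_abs m (c f) (hsum f) (hb f) hε0 hε1) ?_
        rw [Finset.sum_const, nsmul_eq_mul]
      have h4 : ((Finset.univ.filter fun q : Fin m → α =>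
          ∃ f ∈ 𝓕, (m : ℝ) * ε < |∑ i, c f (q i)|).card : ℝ)
          ≤ (𝓕.card : ℝ) * (2 * (K ^ m * Real.exp (-(m * ε ^ 2 / 4)))) := by
        refine le_trans ?_ h3
        exact_mod_cast le_trans h1 h2
      have hKm : (0:ℝ) < K ^ m := by positivity
      calc ((Finset.univ.filter fun q : Fin m → α =>
            ∃ f ∈ 𝓕, (m : ℝ) * ε < |∑ i, c f (q i)|).card : ℝ)
          ≤ (2 * (𝓕.card : ℝ) * Real.exp (-(m * ε ^ 2 / 4))) * K ^ m := by
            rw [mul_comm] at h4 ⊢; convert h4 using 1; ring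
        _ < (1 / 2) * K ^ m := by
            exact mul_lt_mul_of_pos_right hN hKm
        _ = K ^ m / 2 := by ring
    calc (Bad.card : ℝ) ≤ (((Finset.univ.filter fun q : Fin m → α => ¬ Function.Injective q)
          ∪ (Finset.univ.filter fun q : Fin m → α =>
            ∃ f ∈ 𝓕, (m : ℝ) * ε < |∑ i, c f (q i)|)).card : ℝ) := by
          exact_mod_cast Finset.card_le_card hsplit
      _ ≤ ((Finset.univ.filter fun q : Fin m → α => ¬ Function.Injective q).card : ℝ)
          + ((Finset.univ.filter fun q : Fin m → α =>
            ∃ f ∈ 𝓕, (m : ℝ) * ε < |∑ i, c f (q i)|).card : ℝ) := by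
          exact_mod_cast Finset.card_union_le _ _
      _ < K ^ m / 2 + K ^ m / 2 := by linarith
      _ = K ^ m := by ring
  have hcardU : ((Finset.univ : Finset (Fin m → α)).card : ℝ) = K ^ m := by
    rw [Finset.card_univ, Fintype.card_fun, Fintype.card_fin]
    push_cast
    rfl
  have hlt : Bad.card < (Finset.univ : Finset (Fin m → α)).card := by
    have := hcard1
    rw [← hcardU] at this
    exact_mod_cast this
  have hne : Bad ≠ Finset.univ := by
    intro h
    rw [h] at hlt
    exact lt_irrefl _ hlt
  obtain ⟨q, _, hq⟩ := Finset.exists_of_ssubset (Finset.ssubset_univ_iff.2 hne)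
  have hqgood : ¬ ((¬ Function.Injective q) ∨ ∃ f ∈ 𝓕, (m : ℝ) * ε < |∑ i, c f (q i)|) := by
    intro h
    exact hq (Finset.mem_filter.2 ⟨Finset.mem_univ _, h⟩)
  push_neg at hqgood
  obtain ⟨hinj, hgood⟩ := hqgood
  refine ⟨q, hinj, fun f hf => ?_⟩
  have := hgood f hf
  have hrw : ∑ i, c f (q i) = (∑ i, indc f (q i)) - m * μ f := by
    simp only [hcdef, Finset.sum_sub_distrib, Finset.sum_const, Finset.card_univ,
      Fintype.card_fin, nsmul_eq_mul]
  rw [hrw] at this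
  exact this

end Exists
section OBPAux
open Finset

/-- Encoding of the relevant data of an `OBP n w` into a finite type. -/
def codeOBP (n w : ℕ) (p : Fin w × (Fin n → Fin w → Bool → Fin w) × Finset (Fin w)) :
    OBP n w :=
  ⟨p.1, fun i v b => if h : i < n then p.2.1 ⟨i, h⟩ v b else v, p.2.2⟩

lemma walk_codeOBP {n w : ℕ} (B : OBP n w) (z : List Bool) :
    ∀ i v, i + z.length ≤ n →
      (codeOBP n w (B.start, fun i v b => B.trans i.1 v b, B.accept)).walk i v z
        = B.walk i v z := by
  induction z with
  | nil => intro i v _; rfl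
  | cons b z ih =>
    intro i v h
    simp only [List.length_cons] at h
    have hi : i < n := by omega
    show OBP.walk _ (i + 1) ((codeOBP n w _).trans i v b) z = B.walk (i + 1) (B.trans i v b) z
    have htr : (codeOBP n w (B.start, fun i v b => B.trans i.1 v b, B.accept)).trans i v b
        = B.trans i v b := by
      simp only [codeOBP, dif_pos hi]
    rw [htr]
    exact ih (i + 1) (B.trans i v b) (by omega)

lemma eval_codeOBP {n w : ℕ} (B : OBP n w) :
    (codeOBP n w (B.start, fun i v b => B.trans i.1 v b, B.accept)).eval = B.eval := by
  funext x
  unfold OBP.eval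
  have h1 : (codeOBP n w (B.start, fun i v b => B.trans i.1 v b, B.accept)).start = B.start := rfl
  have h2 : (codeOBP n w (B.start, fun i v b => B.trans i.1 v b, B.accept)).accept
      = B.accept := rfl
  rw [h1, h2, walk_codeOBP B (List.ofFn x) 0 B.start (by simp)]

end OBPAux

open Finset in
/-- There exist (non-explicit) deterministic averaging `ε`-samplers for ordered branching
programs of length `n` and width `w` with query complexity `poly(nw/ε)`. -/
theorem stmt12 :
    ∃ C : ℝ, 0 < C ∧ ∀ n w : ℕ, 1 ≤ n → 1 ≤ w → ∀ ε : ℝ, 0 < ε → ε < 1 →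
      ∃ Q : Finset (Fin n → Bool), Q.Nonempty ∧ (Q.card : ℝ) ≤ ((n * w : ℝ) / ε) ^ C ∧
        ∀ B : OBP n w,
          |(∑ x ∈ Q, if B.eval x then (1 : ℝ) else 0) / Q.card - B.acceptProb| ≤ ε := by
  refine ⟨30, by norm_num, ?_⟩
  intro n w hn hw ε hε0 hε1
  have hn1 : (1 : ℝ) ≤ (n : ℝ) := by exact_mod_cast hn
  have hw1 : (1 : ℝ) ≤ (w : ℝ) := by exact_mod_cast hw
  set x : ℝ := (n * w : ℝ) / ε with hxdef
  have hnw1 : (1 : ℝ) ≤ (n : ℝ) * w := by nlinarith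
  have hx1 : 1 ≤ x := by
    rw [hxdef, le_div_iff₀ hε0]
    nlinarith
  have hx0 : (0 : ℝ) < x := by linarith
  have hrpow : ((n * w : ℝ) / ε) ^ (30 : ℝ) = x ^ (30 : ℕ) := by
    rw [← hxdef, ← Real.rpow_natCast x 30]
    norm_num
  have hsum_eq : ∀ (Q : Finset (Fin n → Bool)) (B : OBP n w),
      (∑ y ∈ Q, if B.eval y then (1 : ℝ) else 0) = ∑ y ∈ Q, indc B.eval y := by
    intro Q B; rfl
  have hAP : ∀ B : OBP n w, B.acceptProb = (∑ y : Fin n → Bool, indc B.eval y) / 2 ^ n := by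
    intro B
    unfold OBP.acceptProb
    rw [Finset.natCast_card_filter]
    rfl
  have hcardα : ((Fintype.card (Fin n → Bool) : ℕ) : ℝ) = 2 ^ n := by
    rw [Fintype.card_fun, Fintype.card_bool, Fintype.card_fin]
    push_cast
    rfl
  by_cases hw2 : w = 1
  · -- width one: every program is constant
    subst hw2
    refine ⟨{fun _ => false}, Finset.singleton_nonempty _, ?_, ?_⟩
    · rw [hrpow, Finset.card_singleton]
      exact_mod_cast one_le_pow₀ hx1
    · intro B
      have hconst : ∀ y : Fin n → Bool, B.eval y = B.eval (fun _ => false) := by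
        intro y
        unfold OBP.eval
        have hwalk : B.walk 0 B.start (List.ofFn y)
            = B.walk 0 B.start (List.ofFn (fun _ : Fin n => false)) := Subsingleton.elim _ _
        rw [hwalk]
      have h2n : (0 : ℝ) < 2 ^ n := by positivity
      rw [hsum_eq, hAP B, Finset.sum_singleton, Finset.card_singleton]
      have hsum : (∑ y : Fin n → Bool, indc B.eval y)
          = (2 ^ n : ℝ) * indc B.eval (fun _ => false) := by
        have : ∀ y : Fin n → Bool, indc B.eval y = indc B.eval (fun _ => false) := by
          intro y; unfold indc; rw [hconst y]
        rw [Finset.sum_congr rfl (fun y _ => this y), Finset.sum_const, Finset.card_univ,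
          nsmul_eq_mul, hcardα]
      rw [hsum]
      have : (2 ^ n : ℝ) * indc B.eval (fun _ => false) / 2 ^ n
          = indc B.eval (fun _ => false) := by field_simp
      rw [this, Nat.cast_one, div_one, sub_self, abs_zero]
      exact hε0.le
  by_cases hcase : (2 : ℝ) ^ n ≤ x ^ (30 : ℕ)
  · -- take all points
    refine ⟨Finset.univ, Finset.univ_nonempty, ?_, ?_⟩
    · rw [hrpow, Finset.card_univ]
      rw [hcardα]  -- might not typecheck; card univ is Fintype.card
      exact hcase
    · intro B
      rw [hsum_eq, hAP B, Finset.card_univ, hcardα, sub_self, abs_zero]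
      exact hε0.le
  · -- the probabilistic construction
    push_neg at hcase
    have hw2' : (2 : ℝ) ≤ (w : ℝ) := by
      have : 2 ≤ w := by omega
      exact_mod_cast this
    have hx2 : (2 : ℝ) ≤ x := by
      rw [hxdef, le_div_iff₀ hε0]
      nlinarith
    have hx2pow : ∀ k : ℕ, (2 : ℝ) ^ k ≤ x ^ k := fun k =>
      pow_le_pow_left₀ (by norm_num) hx2 k
    -- the finite family of eval functions
    set 𝓕 : Finset ((Fin n → Bool) → Bool) :=
      Finset.image (fun p => (codeOBP n w p).eval) Finset.univ with h𝓕
    set R : ℝ := (w : ℝ) ^ (2 * n * w + 1) * 2 ^ w with hRdef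
    have hFcard : (𝓕.card : ℝ) ≤ R := by
      have h1 : 𝓕.card ≤ Fintype.card
          (Fin w × (Fin n → Fin w → Bool → Fin w) × Finset (Fin w)) := by
        refine le_trans Finset.card_image_le ?_
        rw [Finset.card_univ]
      have h2 : Fintype.card (Fin w × (Fin n → Fin w → Bool → Fin w) × Finset (Fin w))
          = w ^ (2 * n * w + 1) * 2 ^ w := by
        simp only [Fintype.card_prod, Fintype.card_fun, Fintype.card_finset,
          Fintype.card_bool, Fintype.card_fin]
        have e1 : ((w ^ 2) ^ w) ^ n = w ^ (2 * n * w) := by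
          rw [← pow_mul, ← pow_mul]
          congr 1
          ring
        rw [e1, pow_add, pow_one]
        ring
      rw [hRdef]
      calc (𝓕.card : ℝ) ≤ ((w ^ (2 * n * w + 1) * 2 ^ w : ℕ) : ℝ) := by
            exact_mod_cast h1.trans_eq h2
        _ = (w : ℝ) ^ (2 * n * w + 1) * 2 ^ w := by push_cast; ring
    have hw0 : (0 : ℝ) < (w : ℝ) := by linarith
    have hR0 : (0 : ℝ) < R := by rw [hRdef]; positivity
    have hR1 : (1 : ℝ) ≤ R := by
      rw [hRdef]
      have h1 : (1 : ℝ) ≤ (w : ℝ) ^ (2 * n * w + 1) := one_le_pow₀ hw1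
      have h2 : (1 : ℝ) ≤ (2 : ℝ) ^ w := one_le_pow₀ (by norm_num)
      nlinarith
    have hlog2 : Real.log 2 ≤ 1 := by
      have := Real.log_le_sub_one_of_pos (by norm_num : (0 : ℝ) < 2); linarith
    have hlogw : Real.log w ≤ (w : ℝ) := by
      have := Real.log_le_sub_one_of_pos hw0; linarith
    have hlogw0 : 0 ≤ Real.log w := Real.log_nonneg hw1
    have hlogR : Real.log (4 * R) ≤ 6 * ((n : ℝ) * w) ^ 2 := by
      rw [hRdef, Real.log_mul (by norm_num) (by positivity),
        Real.log_mul (by positivity) (by positivity), Real.log_pow, Real.log_pow]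
      have h4 : Real.log 4 = 2 * Real.log 2 := by
        rw [show (4 : ℝ) = 2 ^ 2 by norm_num, Real.log_pow]; push_cast; ring
      rw [h4]
      have hc : ((2 * n * w + 1 : ℕ) : ℝ) = 2 * (n : ℝ) * w + 1 := by push_cast; ring
      rw [hc]
      have hl2 : 0 ≤ Real.log 2 := Real.log_nonneg (by norm_num)
      nlinarith [mul_le_mul_of_nonneg_left hlog2 (le_trans zero_le_one hw1),
        mul_le_mul_of_nonneg_left hlogw (by positivity : (0:ℝ) ≤ 2 * (n:ℝ) * w + 1)]
    -- choose the number of samples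
    set m : ℕ := ⌈(48 : ℝ) * ((n : ℝ) * w) ^ 2 / ε ^ 2⌉₊ with hmdef
    have hmpos : (0 : ℝ) < 48 * ((n : ℝ) * w) ^ 2 / ε ^ 2 := by positivity
    have hm1 : 1 ≤ m := Nat.one_le_ceil_iff.2 hmpos
    have hml : 48 * ((n : ℝ) * w) ^ 2 / ε ^ 2 ≤ (m : ℝ) := Nat.le_ceil _
    have hmu : (m : ℝ) ≤ 48 * ((n : ℝ) * w) ^ 2 / ε ^ 2 + 1 :=
      (Nat.ceil_lt_add_one hmpos.le).le
    have hxsq : ((n : ℝ) * w) ^ 2 / ε ^ 2 = x ^ 2 := by rw [hxdef, div_pow]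
    have ht : 48 * ((n : ℝ) * w) ^ 2 / ε ^ 2 = 48 * x ^ 2 := by rw [← hxsq]; ring
    have hml' : 48 * x ^ 2 ≤ (m : ℝ) := by rw [← ht]; exact hml
    have hmu' : (m : ℝ) ≤ 48 * x ^ 2 + 1 := by rw [← ht]; exact hmu
    have hx2sq : (1 : ℝ) ≤ x ^ 2 := one_le_pow₀ hx1
    have hm_le : (m : ℝ) ≤ x ^ 8 := by
      have h49 : (m : ℝ) ≤ 49 * x ^ 2 := by linarith
      have h64 : (49 : ℝ) ≤ x ^ 6 := le_trans (by norm_num) (hx2pow 6)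
      calc (m : ℝ) ≤ 49 * x ^ 2 := h49
        _ ≤ x ^ 6 * x ^ 2 := by nlinarith
        _ = x ^ 8 := by ring
    have hm0 : (0 : ℝ) < (m : ℝ) := by exact_mod_cast hm1
    have hm2 : (m : ℝ) ^ 2 ≤ ((Fintype.card (Fin n → Bool) : ℕ) : ℝ) / 2 := by
      rw [hcardα]
      have h16 : (m : ℝ) ^ 2 ≤ x ^ 16 := by
        calc (m : ℝ) ^ 2 ≤ (x ^ 8) ^ 2 := pow_le_pow_left₀ hm0.le hm_le 2
          _ = x ^ 16 := by ring
      have h14 : (2 : ℝ) ≤ x ^ 14 := le_trans (by norm_num) (hx2pow 14)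
      have h30 : x ^ 14 * x ^ 16 = x ^ 30 := by ring
      have hx16 : (0 : ℝ) ≤ x ^ 16 := by positivity
      nlinarith [hcase]
    have hN : 2 * (𝓕.card : ℝ) * Real.exp (-((m : ℝ) * ε ^ 2 / 4)) < 1 / 2 := by
      have hexp : Real.exp (-((m : ℝ) * ε ^ 2 / 4)) < 1 / (4 * R) := by
        rw [show (1 / (4 * R) : ℝ) = Real.exp (Real.log (1 / (4 * R))) from
          (Real.exp_log (by positivity)).symm]
        apply Real.exp_lt_exp.2
        rw [one_div, Real.log_inv, neg_lt_neg_iff]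
        have hε2 : (0 : ℝ) < ε ^ 2 := by positivity
        have hxe : x * ε = (n : ℝ) * w := by rw [hxdef]; field_simp
        have h6 : 6 * ((n : ℝ) * w) ^ 2 = 6 * x ^ 2 * ε ^ 2 := by rw [← hxe]; ring
        have hx2pos : (0 : ℝ) < x ^ 2 := by positivity
        have h24 : 24 * x ^ 2 * ε ^ 2 < (m : ℝ) * ε ^ 2 := by
          have hlt : 24 * x ^ 2 < (m : ℝ) := by nlinarith
          exact mul_lt_mul_of_pos_right hlt hε2
        nlinarith [hlogR, h6, h24, mul_pos hx2pos hε2]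
      have he0 : (0 : ℝ) < Real.exp (-((m : ℝ) * ε ^ 2 / 4)) := Real.exp_pos _
      calc 2 * (𝓕.card : ℝ) * Real.exp (-((m : ℝ) * ε ^ 2 / 4))
          ≤ 2 * R * Real.exp (-((m : ℝ) * ε ^ 2 / 4)) := by nlinarith
        _ < 2 * R * (1 / (4 * R)) := by
            refine mul_lt_mul_of_pos_left hexp (by linarith)
        _ = 1 / 2 := by
            field_simp
            ring
    obtain ⟨q, hinj, hgood⟩ := exists_good 𝓕 m hm1 hε0 hε1.le hN hm2
    have hQcard : (Finset.image q Finset.univ).card = m := by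
      rw [Finset.card_image_of_injective _ hinj, Finset.card_univ, Fintype.card_fin]
    have : Nonempty (Fin m) := ⟨⟨0, hm1⟩⟩
    refine ⟨Finset.image q Finset.univ, Finset.Nonempty.image Finset.univ_nonempty q, ?_, ?_⟩
    · rw [hrpow, hQcard]
      calc (m : ℝ) ≤ x ^ 8 := hm_le
        _ ≤ x ^ 30 := pow_le_pow_right₀ hx1 (by norm_num)
    · intro B
      have hmem : B.eval ∈ 𝓕 := by
        rw [h𝓕]
        exact Finset.mem_image.2 ⟨(B.start, fun i v b => B.trans i.1 v b, B.accept),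
          Finset.mem_univ _, eval_codeOBP B⟩
      have hg := hgood B.eval hmem
      rw [hcardα] at hg
      have hsumQ : (∑ y ∈ Finset.image q Finset.univ, if B.eval y then (1 : ℝ) else 0)
          = ∑ i, indc B.eval (q i) := by
        rw [hsum_eq]
        exact Finset.sum_image (fun a _ b _ h => hinj h)
      rw [hsumQ, hQcard, hAP B]
      set S := ∑ i, indc B.eval (q i) with hS
      set μ := (∑ y : Fin n → Bool, indc B.eval y) / 2 ^ n with hμ
      have hdiff : S / (m : ℝ) - μ = (S - (m : ℝ) * μ) / m := by field_simp
      rw [hdiff, abs_div, abs_of_pos hm0, div_le_iff₀ hm0]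
      calc |S - (m : ℝ) * μ| ≤ (m : ℝ) * ε := hg
        _ = ε * m := by ring
end

section
/- For every H ⊆ {0,1}^n with |H| ≤ n − 1, there exists a nonzero vector z ∈ 𝔽₂^n and a permutation branching program B of length n and width 2 with a single accept state computing B(x) = 1 iff ⊕_{i=1}^n z_i·x_i = 1, such that Pr[B(U_n)=1] ≥ 1/2 while B(x) = 0 for every x ∈ H. -/
def pBP (n : ℕ) (z : Fin n → Bool) : OBP n 2 where
  start := 0
  trans := fun i v b => if h : i < n then (if z ⟨i, h⟩ && b then v + 1 else v) else v
  accept := {1}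

-- layer-shift lemma: walk is additive in start state
lemma walk_add {n : ℕ} (z : Fin n → Bool) (l : List Bool) :
    ∀ i (v : Fin 2), (pBP n z).walk i v l = v + (pBP n z).walk i 0 l := by
  induction l with
  | nil => intro i v; simp [OBP.walk]
  | cons b t ih =>
      intro i v
      show (pBP n z).walk (i+1) ((pBP n z).trans i v b) t = _
      rw [ih (i+1)]
      conv_rhs => rw [show (pBP n z).walk i 0 (b :: t) = (pBP n z).walk (i+1) ((pBP n z).trans i 0 b) t from rfl, ih (i+1)]
      show _ = v + ((pBP n z).trans i 0 b + _)
      rw [← add_assoc]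
      congr 1
      show (pBP n z).trans i v b = v + (pBP n z).trans i 0 b
      simp only [pBP]
      split
      · split
        · show v + 1 = v + (0 + 1); rw [zero_add]
        · show v = v + 0; rw [add_zero]
      · show v = v + 0; rw [add_zero]

lemma walk_ofFn {n : ℕ} (z : Fin n → Bool) :
    ∀ (m : ℕ) (j : ℕ) (x : Fin m → Bool),
    (pBP n z).walk j 0 (List.ofFn x)
      = ∑ i : Fin m, (pBP n z).trans (j + i) 0 (x i) := by
  intro m
  induction m with
  | zero => intro j x; simp [OBP.walk]
  | succ m ih =>
      intro j x
      rw [List.ofFn_succ]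
      show (pBP n z).walk (j+1) ((pBP n z).trans j 0 (x 0)) (List.ofFn fun i => x i.succ) = _
      rw [walk_add, ih (j+1)]
      rw [Fin.sum_univ_succ]
      have e1 : (pBP n z).trans (j + ((0 : Fin (m+1)) : ℕ)) 0 (x 0) = (pBP n z).trans j 0 (x 0) := by
        norm_num
      rw [e1]
      congr 1
      apply Finset.sum_congr rfl
      intro i _
      have e2 : j + ((i.succ : Fin (m+1)) : ℕ) = j + 1 + (i : ℕ) := by
        simp [Fin.val_succ]; omega
      rw [e2]

lemma trans_val {n : ℕ} (z : Fin n → Bool) (i : Fin n) (b : Bool) :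
    (pBP n z).trans i 0 b = (if z i && b then (1 : ZMod 2) else 0) := by
  simp only [pBP]
  rw [dif_pos i.isLt]
  split
  · rfl
  · rfl

lemma eval_iff {n : ℕ} (z : Fin n → Bool) (x : Fin n → Bool) :
    (pBP n z).eval x = true ↔ (∑ i : Fin n, if z i && x i then (1 : ZMod 2) else 0) = 1 := by
  rw [OBP.eval, decide_eq_true_iff]
  have h0 : (pBP n z).start = 0 := rfl
  rw [h0, walk_ofFn z n 0 x]
  have : ∀ i : Fin n, (pBP n z).trans (0 + i) 0 (x i) = (if z i && x i then (1 : ZMod 2) else 0) := by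
    intro i; rw [Nat.zero_add]; exact trans_val z i (x i)
  rw [Finset.sum_congr rfl (fun i _ => this i)]
  rw [show (pBP n z).accept = {1} from rfl, Finset.mem_singleton]
  exact Iff.rfl


lemma perm {n : ℕ} (z : Fin n → Bool) : (pBP n z).IsPerm := by
  intro i hi b
  have h : (fun v => (pBP n z).trans i v b) = (fun v : Fin 2 => if z ⟨i, hi⟩ && b then v + 1 else v) := by
    funext v; simp [pBP, dif_pos hi]
  rw [h]
  by_cases hc : z ⟨i, hi⟩ && b
  · simp only [if_pos hc]; decide
  · simp only [if_neg hc]; exact Function.bijective_id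

lemma sum_flip {n : ℕ} (z x : Fin n → Bool) (j : Fin n) (hj : z j = true) :
    (∑ i : Fin n, if z i && (Function.update x j (!x j)) i then (1 : ZMod 2) else 0)
      = (∑ i : Fin n, if z i && x i then (1 : ZMod 2) else 0) + 1 := by
  have hfun : (fun i => if z i && (Function.update x j (!x j)) i then (1 : ZMod 2) else 0)
      = Function.update (fun i => if z i && x i then (1 : ZMod 2) else 0) j
          (if z j && !x j then 1 else 0) := by
    funext i
    by_cases h : i = j
    · subst h; simp [Function.update_self]
    · simp [Function.update_of_ne h]
  calc (∑ i : Fin n, if z i && (Function.update x j (!x j)) i then (1 : ZMod 2) else 0)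
      = ∑ i : Fin n, Function.update (fun i => if z i && x i then (1 : ZMod 2) else 0) j
          (if z j && !x j then 1 else 0) i := by rw [hfun]
    _ = (if z j && !x j then (1:ZMod 2) else 0) + ∑ i ∈ Finset.univ.erase j, (if z i && x i then (1:ZMod 2) else 0) := by
          rw [Finset.sum_update_of_mem (Finset.mem_univ j)]
          rw [Finset.sum_congr (by rw [Finset.sdiff_singleton_eq_erase]) (fun _ _ => rfl)]
    _ = ((if z j && x j then (1:ZMod 2) else 0) + 1) + ∑ i ∈ Finset.univ.erase j, (if z i && x i then (1:ZMod 2) else 0) := by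
          congr 1
          rw [hj]
          cases x j <;> decide
    _ = (∑ i : Fin n, if z i && x i then (1 : ZMod 2) else 0) + 1 := by
          rw [← Finset.add_sum_erase _ _ (Finset.mem_univ j)]
          ring

lemma card_half {n : ℕ} (z : Fin n → Bool) (hz : z ≠ fun _ => false) :
    2 * (Finset.univ.filter fun x : Fin n → Bool =>
        (∑ i : Fin n, if z i && x i then (1 : ZMod 2) else 0) = 1).card = 2 ^ n := by
  obtain ⟨j, hj⟩ : ∃ j, z j = true := by
    by_contra h
    push_neg at h
    exact hz (funext fun i => by simpa using h i)
  set P : (Fin n → Bool) → Prop := fun x => (∑ i : Fin n, if z i && x i then (1 : ZMod 2) else 0) = 1 with hP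
  have key : ∀ s : ZMod 2, s ≠ 1 → s = 0 := by decide
  have e_inv : ∀ x : Fin n → Bool, Function.update (Function.update x j (!x j)) j (!(Function.update x j (!x j)) j) = x := by
    intro x
    funext i
    by_cases h : i = j
    · subst h; simp [Function.update_self]
    · simp [Function.update_of_ne h]
  have hbij : (Finset.univ.filter fun x => P x).card = (Finset.univ.filter fun x => ¬ P x).card := by
    refine Finset.card_bij' (fun x _ => Function.update x j (!x j)) (fun x _ => Function.update x j (!x j)) ?_ ?_ ?_ ?_
    · intro x hx
      simp only [Finset.mem_filter, Finset.mem_univ, true_and] at hx ⊢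
      rw [hP]
      simp only []
      rw [sum_flip z x j hj, hx]
      decide
    · intro x hx
      simp only [Finset.mem_filter, Finset.mem_univ, true_and] at hx ⊢
      rw [hP]
      simp only []
      rw [sum_flip z x j hj, key _ hx]
      decide
    · intro x _; exact e_inv x
    · intro x _; exact e_inv x
  classical
  have hcard : (Finset.univ : Finset (Fin n → Bool)).card = 2 ^ n := by
    simp [Finset.card_univ]
  rw [Finset.filter_not, Finset.card_sdiff_of_subset (Finset.filter_subset _ _), hcard] at hbij
  have hle : (Finset.univ.filter fun x => P x).card ≤ 2 ^ n := by
    rw [← hcard]; exact Finset.card_le_card (Finset.filter_subset _ _)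
  set a := (Finset.univ.filter fun x => P x).card with ha
  set N := 2 ^ n with hN
  clear_value a N
  clear ha hN hP hcard hz hj key e_inv
  omega

lemma exists_z {n : ℕ} (hn : 1 ≤ n) (H : Finset (Fin n → Bool)) (hH : H.card ≤ n - 1) :
    ∃ z : Fin n → Bool, z ≠ (fun _ => false) ∧
      ∀ y ∈ H, (∑ i : Fin n, if z i && y i then (1 : ZMod 2) else 0) = 0 := by
  classical
  let φ : (Fin n → ZMod 2) →ₗ[ZMod 2] (↥H → ZMod 2) :=
    { toFun := fun w y => ∑ i : Fin n, (if (y : Fin n → Bool) i then w i else 0)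
      map_add' := by
        intro a b; funext y
        simp only [Pi.add_apply]
        rw [← Finset.sum_add_distrib]
        apply Finset.sum_congr rfl
        intro i _
        split <;> simp
      map_smul' := by
        intro c a; funext y
        simp only [Pi.smul_apply, smul_eq_mul, RingHom.id_apply]
        rw [Finset.mul_sum]
        apply Finset.sum_congr rfl
        intro i _
        split <;> simp }
  have hni : ¬ Function.Injective φ := by
    intro hinj
    have h1 := LinearMap.finrank_le_finrank_of_injective hinj
    rw [Module.finrank_pi, Module.finrank_pi, Fintype.card_coe, Fintype.card_fin] at h1
    omega
  have : ∃ w : Fin n → ZMod 2, w ≠ 0 ∧ φ w = 0 := by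
    rw [← LinearMap.ker_eq_bot] at hni
    obtain ⟨w, hw1, hw2⟩ := Submodule.exists_mem_ne_zero_of_ne_bot hni
    exact ⟨w, hw2, hw1⟩
  obtain ⟨w, hw0, hwk⟩ := this
  refine ⟨fun i => decide (w i = 1), ?_, ?_⟩
  · intro hc
    apply hw0
    funext i
    have : decide (w i = 1) = false := congrFun hc i
    have h2 : w i ≠ 1 := by simpa using this
    have : ∀ s : ZMod 2, s ≠ 1 → s = 0 := by decide
    exact this _ h2
  · intro y hy
    have hterm : ∀ (s : ZMod 2) (b : Bool),
        (if decide (s = 1) && b then (1 : ZMod 2) else 0) = (if b then s else 0) := by decide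
    have := congrFun hwk ⟨y, hy⟩
    simp only [φ, LinearMap.coe_mk, AddHom.coe_mk, Pi.zero_apply] at this
    calc (∑ i : Fin n, if (fun i => decide (w i = 1)) i && y i then (1 : ZMod 2) else 0)
        = ∑ i : Fin n, (if y i then w i else 0) := by
          apply Finset.sum_congr rfl; intro i _; exact hterm (w i) (y i)
      _ = 0 := this

/-- Any set `H` of at most `n - 1` strings is avoided by some parity function computed by
a width-2 permutation branching program with a single accept state and acceptance
probability at least `1/2`. -/
theorem stmt13 {n : ℕ} (hn : 1 ≤ n) (H : Finset (Fin n → Bool)) (hH : H.card ≤ n - 1) :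
    ∃ z : Fin n → Bool, z ≠ (fun _ => false) ∧
      ∃ B : OBP n 2, B.IsPerm ∧ B.accept.card = 1 ∧
        (∀ x : Fin n → Bool,
          B.eval x = true ↔ (∑ i : Fin n, if z i && x i then (1 : ZMod 2) else 0) = 1) ∧
        B.acceptProb ≥ 1 / 2 ∧ ∀ x ∈ H, B.eval x = false := by
  classical
  obtain ⟨z, hz, hzH⟩ := exists_z hn H hH
  refine ⟨z, hz, pBP n z, perm z, rfl, fun x => eval_iff z x, ?_, ?_⟩
  · have h2 := card_half z hz
    have hfe : (Finset.univ.filter fun x : Fin n → Bool => (pBP n z).eval x = true)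
        = Finset.univ.filter (fun x : Fin n → Bool =>
            (∑ i : Fin n, if z i && x i then (1 : ZMod 2) else 0) = 1) := by
      apply Finset.filter_congr
      intro x _
      simpa using eval_iff z x
    rw [OBP.acceptProb, hfe]
    have hcast : (2 : ℝ) * ((Finset.univ.filter (fun x : Fin n → Bool =>
        (∑ i : Fin n, if z i && x i then (1 : ZMod 2) else 0) = 1)).card : ℝ) = 2 ^ n := by
      have := congrArg (Nat.cast : ℕ → ℝ) h2
      push_cast at this
      linarith
    have hpos : (0 : ℝ) < 2 ^ n := by positivity
    rw [ge_iff_le, le_div_iff₀ hpos]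
    nlinarith
  · intro x hx
    have h0 := hzH x hx
    have hne : ¬ ((pBP n z).eval x = true) := by
      rw [eval_iff z x, h0]
      decide
    simpa using hne
end
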